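/- arXiv:1708.07244 — 8 statements merged into one kernel-verified Lean document; each statement's English description precedes it below -/
import Mathlib

section
/- There exists a constant C > 0 (independent of the dimension) such that for every dimension d ≥ 2, every real ε with 0 < ε < 1, and every integer n with (n : ℝ) ≥ (C·d/ε)^((d−1)/2), there exist vectors w : Fin n → EuclideanSpace ℝ (Fin d) and scalars b : Fin n → ℝ such that the polytope P = {x | ∀ i, ⟪w i, x⟫ ≤ b i} contains the closed unit ball B = Metric.closedBall 0 1 and volume (P \ B) ≤ ε · volume B. -/
open MeasureTheory
open Metric
open scoped RealInnerProductSpace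

-- 2d ≤ 4^(d-1)
lemma aux_two_mul_le (d : ℕ) (hd : 2 ≤ d) : (2 * d : ℝ) ≤ 4 ^ (d - 1) := by
  induction d with
  | zero => omega
  | succ k ih =>
    rcases Nat.lt_or_ge k 2 with hk | hk
    · interval_cases k
      · omega
      · norm_num
    · have h := ih (by omega)
      have : k + 1 - 1 = (k - 1) + 1 := by omega
      rw [this, pow_succ]
      push_cast
      have h4 : (1:ℝ) ≤ 4 ^ (k-1) := one_le_pow₀ (by norm_num)
      nlinarith

-- a^n - b^n ≤ n * a^(n-1) * (a-b)
lemma aux_pow_sub_pow (a b : ℝ) (n : ℕ) (hb : 0 ≤ b) (hba : b ≤ a) :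
    a ^ n - b ^ n ≤ n * a ^ (n - 1) * (a - b) := by
  have ha : 0 ≤ a := hb.trans hba
  rw [← geom_sum₂_mul]
  have : ∑ i ∈ Finset.range n, a ^ i * b ^ (n - 1 - i) ≤ n * a ^ (n-1) := by
    calc ∑ i ∈ Finset.range n, a ^ i * b ^ (n - 1 - i)
        ≤ ∑ _i ∈ Finset.range n, a ^ (n-1) := by
          apply Finset.sum_le_sum
          intro i hi
          simp only [Finset.mem_range] at hi
          calc a ^ i * b ^ (n-1-i) ≤ a ^ i * a ^ (n-1-i) := by
                exact mul_le_mul_of_nonneg_left (pow_le_pow_left₀ hb hba _) (pow_nonneg ha _)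
            _ = a ^ (n-1) := by rw [← pow_add]; congr 1; omega
      _ = n * a ^ (n-1) := by rw [Finset.sum_const, Finset.card_range, nsmul_eq_mul]
  exact mul_le_mul_of_nonneg_right this (by linarith) |>.trans_eq rfl |> fun h => h

lemma packing_card (d : ℕ) (hd : 1 ≤ d) (t : ℝ) (ht : 0 < t) (ht1 : t ≤ 1)
    (s : Finset (EuclideanSpace ℝ (Fin d)))
    (hs : ↑s ⊆ Metric.sphere (0 : EuclideanSpace ℝ (Fin d)) 1)
    (hsep : ∀ x ∈ s, ∀ y ∈ s, x ≠ y → 2 * t ≤ dist x y) :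
    (s.card : ℝ) * t ^ d ≤ (1 + t) ^ d - (1 - t) ^ d := by
  haveI : Nontrivial (EuclideanSpace ℝ (Fin d)) := by
    apply Module.nontrivial_of_finrank_pos (R := ℝ)
    rw [finrank_euclideanSpace_fin]; omega
  set v : ENNReal := volume (ball (0 : EuclideanSpace ℝ (Fin d)) 1) with hv
  have hv0 : v ≠ 0 := (measure_ball_pos _ _ one_pos).ne'
  have hvtop : v ≠ ⊤ := measure_ball_lt_top.ne
  have hfr : Module.finrank ℝ (EuclideanSpace ℝ (Fin d)) = d := finrank_euclideanSpace_fin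
  have hdisj : (↑s : Set (EuclideanSpace ℝ (Fin d))).PairwiseDisjoint (fun x => ball x t) := by
    intro x hx y hy hxy
    apply Set.disjoint_left.2
    intro z hzx hzy
    have hsep' := hsep x hx y hy hxy
    have h1 : dist x z < t := by rw [dist_comm]; exact mem_ball.1 hzx
    have h2 : dist z y < t := mem_ball.1 hzy
    linarith [dist_triangle x z y]
  have hmeas : volume (⋃ x ∈ s, ball x t) = ∑ x ∈ s, volume (ball x t) :=
    measure_biUnion_finset hdisj (fun x _ => measurableSet_ball)
  have hballvol : ∀ x : EuclideanSpace ℝ (Fin d),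
      volume (ball x t) = ENNReal.ofReal (t ^ d) * v := by
    intro x
    rw [Measure.addHaar_ball volume x ht.le, hfr]
  have hsum : volume (⋃ x ∈ s, ball x t) = (s.card : ENNReal) * (ENNReal.ofReal (t ^ d) * v) := by
    rw [hmeas]
    simp only [hballvol, Finset.sum_const, nsmul_eq_mul]
  have hsub : (⋃ x ∈ s, ball x t) ⊆ ball (0 : EuclideanSpace ℝ (Fin d)) (1 + t) \ closedBall 0 (1 - t) := by
    intro z hz
    simp only [Set.mem_iUnion] at hz
    obtain ⟨x, hx, hzx⟩ := hz
    have hxs : ‖x‖ = 1 := by simpa using hs hx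
    have hzx' : ‖z - x‖ < t := by rw [← dist_eq_norm]; exact mem_ball.1 hzx
    have hub : ‖z‖ - ‖x‖ ≤ ‖z - x‖ := norm_sub_norm_le z x
    have hlb : ‖x‖ - ‖z‖ ≤ ‖z - x‖ := by
      have := norm_sub_norm_le x z; rwa [norm_sub_rev] at this
    constructor
    · rw [mem_ball, dist_zero_right]; linarith
    · simp only [Set.mem_setOf_eq, mem_closedBall, dist_zero_right, not_le]
      linarith
  have hann : volume (ball (0 : EuclideanSpace ℝ (Fin d)) (1 + t) \ closedBall 0 (1 - t))
      = ENNReal.ofReal ((1 + t) ^ d) * v - ENNReal.ofReal ((1 - t) ^ d) * v := by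
    rw [measure_diff (closedBall_subset_ball (by linarith))
      measurableSet_closedBall.nullMeasurableSet measure_closedBall_lt_top.ne,
      Measure.addHaar_ball volume _ (by linarith : (0:ℝ) ≤ 1 + t),
      Measure.addHaar_closedBall volume _ (by linarith : (0:ℝ) ≤ 1 - t), hfr]
  have hle : (s.card : ENNReal) * (ENNReal.ofReal (t ^ d) * v)
      ≤ ENNReal.ofReal ((1 + t) ^ d) * v - ENNReal.ofReal ((1 - t) ^ d) * v := by
    rw [← hsum, ← hann]; exact measure_mono hsub
  have hle2 : (s.card : ENNReal) * ENNReal.ofReal (t ^ d)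
      ≤ ENNReal.ofReal ((1 + t) ^ d) - ENNReal.ofReal ((1 - t) ^ d) := by
    rw [← ENNReal.mul_le_mul_iff_left hv0 hvtop, ENNReal.sub_mul (fun _ _ => hvtop), mul_assoc]
    exact hle
  have h1t : (0:ℝ) ≤ (1 - t) ^ d := pow_nonneg (by linarith) _
  rw [← ENNReal.ofReal_sub _ h1t] at hle2
  have hthis : ENNReal.ofReal ((s.card : ℝ) * t ^ d) ≤ ENNReal.ofReal ((1 + t) ^ d - (1 - t) ^ d) := by
    rwa [ENNReal.ofReal_mul (by positivity), ENNReal.ofReal_natCast]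
  have hnn : (0:ℝ) ≤ (1 + t) ^ d - (1 - t) ^ d := by
    have : (1 - t) ^ d ≤ (1 + t) ^ d := pow_le_pow_left₀ (by linarith) (by linarith) _
    linarith
  exact (ENNReal.ofReal_le_ofReal_iff hnn).1 hthis

lemma exists_net (d : ℕ) (δ : ℝ) (hδ : 0 < δ) (N : ℕ)
    (hbound : ∀ s : Finset (EuclideanSpace ℝ (Fin d)),
      ↑s ⊆ Metric.sphere (0 : EuclideanSpace ℝ (Fin d)) 1 →
      (∀ x ∈ s, ∀ y ∈ s, x ≠ y → δ ≤ dist x y) → s.card ≤ N) :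
    ∃ s : Finset (EuclideanSpace ℝ (Fin d)),
      ↑s ⊆ Metric.sphere (0 : EuclideanSpace ℝ (Fin d)) 1 ∧ s.card ≤ N ∧
      (∀ x ∈ s, ∀ y ∈ s, x ≠ y → δ ≤ dist x y) ∧
      ∀ v ∈ Metric.sphere (0 : EuclideanSpace ℝ (Fin d)) 1, ∃ x ∈ s, dist v x ≤ δ := by
  classical
  set good : Finset (EuclideanSpace ℝ (Fin d)) → Prop := fun s =>
    ↑s ⊆ Metric.sphere (0 : EuclideanSpace ℝ (Fin d)) 1 ∧
    (∀ x ∈ s, ∀ y ∈ s, x ≠ y → δ ≤ dist x y) with hgood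
  set A : Set ℕ := {m | ∃ s, good s ∧ s.card = m} with hA
  have h0A : 0 ∈ A := ⟨∅, ⟨by simp, by simp⟩, rfl⟩
  have hbdd : BddAbove A := by
    refine ⟨N, fun m hm => ?_⟩
    obtain ⟨s, ⟨h1, h2⟩, rfl⟩ := hm
    exact hbound s h1 h2
  obtain ⟨s, ⟨hs1, hs2⟩, hcard⟩ := Nat.sSup_mem ⟨0, h0A⟩ hbdd
  refine ⟨s, hs1, ?_, hs2, ?_⟩
  · rw [hcard]; exact csSup_le ⟨0, h0A⟩ (fun m hm => by
      obtain ⟨u, ⟨h1, h2⟩, rfl⟩ := hm; exact hbound u h1 h2)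
  · intro v hv
    by_contra hcon
    push_neg at hcon
    have hvs : v ∉ s := fun h => absurd (hcon v h) (by simp [hδ.le])
    have hgood' : good (insert v s) := by
      constructor
      · rw [Finset.coe_insert]
        exact Set.insert_subset hv hs1
      · intro x hx y hy hxy
        rcases Finset.mem_insert.1 hx with rfl | hx' <;>
          rcases Finset.mem_insert.1 hy with rfl | hy'
        · exact absurd rfl hxy
        · exact (hcon y hy').le
        · rw [dist_comm]
          exact (hcon x hx').le
        · exact hs2 x hx' y hy' hxy
    have : (insert v s).card ∈ A := ⟨insert v s, hgood', rfl⟩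
    have hle := le_csSup hbdd this
    rw [Finset.card_insert_of_notMem hvs, hcard] at hle
    omega

lemma geom_lemma (d : ℕ) (t : ℝ)
    (s : Finset (EuclideanSpace ℝ (Fin d)))
    (hs : ↑s ⊆ Metric.sphere (0 : EuclideanSpace ℝ (Fin d)) 1)
    (hnet : ∀ v ∈ Metric.sphere (0 : EuclideanSpace ℝ (Fin d)) 1, ∃ u ∈ s, dist v u ≤ 2 * t)
    (x : EuclideanSpace ℝ (Fin d)) (hx : ∀ u ∈ s, ⟪u, x⟫ ≤ 1) :
    ‖x‖ * (1 - 2 * t ^ 2) ≤ 1 := by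
  rcases eq_or_ne x 0 with rfl | hx0
  · simp
  have hnx : 0 < ‖x‖ := norm_pos_iff.2 hx0
  set v : EuclideanSpace ℝ (Fin d) := ‖x‖⁻¹ • x with hvdef
  have hvnorm : ‖v‖ = 1 := by
    rw [hvdef, norm_smul, norm_inv, norm_norm, inv_mul_cancel₀ hnx.ne']
  obtain ⟨u, hu, hdu⟩ := hnet v (by simpa [mem_sphere_iff_norm] using hvnorm)
  have hunorm : ‖u‖ = 1 := by simpa using hs hu
  have hdu' : ‖v - u‖ ≤ 2 * t := by rwa [← dist_eq_norm]
  have ht0 : 0 ≤ 2 * t := le_trans (norm_nonneg _) hdu'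
  have hsq : ‖v - u‖ ^ 2 ≤ (2 * t) ^ 2 := by
    apply sq_le_sq' _ hdu
    · calc -(2*t) ≤ 0 := by linarith
        _ ≤ ‖v - u‖ := norm_nonneg _
  have hexp : ‖v - u‖ ^ 2 = 2 - 2 * ⟪v, u⟫ := by
    rw [norm_sub_sq_real, hvnorm, hunorm]; ring
  have hinner : 1 - 2 * t ^ 2 ≤ ⟪v, u⟫ := by nlinarith
  have hxv : x = ‖x‖ • v := by
    rw [hvdef, smul_smul, mul_inv_cancel₀ hnx.ne', one_smul]
  have hux : ⟪u, x⟫ = ‖x‖ * ⟪u, v⟫ := by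
    conv_lhs => rw [hxv]
    rw [real_inner_smul_right]
  have h1 : ⟪u, x⟫ ≤ 1 := hx u hu
  rw [real_inner_comm v u] at hux
  rw [hux] at h1
  nlinarith [hinner, hnx.le]

set_option maxHeartbeats 1000000 in
theorem ball_approximation_with_threshold :
    ∃ C : ℝ, 0 < C ∧
      ∀ d : ℕ, 2 ≤ d → ∀ ε : ℝ, 0 < ε → ε < 1 →
        ∀ n : ℕ, (C * (d : ℝ) / ε) ^ (((d : ℝ) - 1) / 2) ≤ (n : ℝ) →
          ∃ (w : Fin n → EuclideanSpace ℝ (Fin d)) (b : Fin n → ℝ),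
            Metric.closedBall (0 : EuclideanSpace ℝ (Fin d)) 1 ⊆
              {x : EuclideanSpace ℝ (Fin d) | ∀ i, ⟪w i, x⟫ ≤ b i} ∧
            volume ({x : EuclideanSpace ℝ (Fin d) | ∀ i, ⟪w i, x⟫ ≤ b i} \
                Metric.closedBall (0 : EuclideanSpace ℝ (Fin d)) 1) ≤
              ENNReal.ofReal ε *
                volume (Metric.closedBall (0 : EuclideanSpace ℝ (Fin d)) 1) := by
  refine ⟨512, by norm_num, ?_⟩
  intro d hd ε hε0 hε1 n hn
  have hd1 : (2:ℝ) ≤ d := by exact_mod_cast hd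
  have hd0 : (0:ℝ) < d := by linarith
  -- the scale t
  set t := Real.sqrt (ε / (8 * d)) with htdef
  have htsq : t ^ 2 = ε / (8 * d) := Real.sq_sqrt (by positivity)
  have ht : 0 < t := Real.sqrt_pos.2 (by positivity)
  have htsq16 : t ^ 2 ≤ 1 / 16 := by
    rw [htsq]
    rw [div_le_div_iff₀ (by positivity) (by norm_num)]
    nlinarith
  have ht4 : t ≤ 1 / 4 := by nlinarith [htsq16, ht.le]
  -- rpow identity
  set a := 512 * (d:ℝ) / ε with hadef
  have ha : 0 < a := by positivity
  have ha8 : a = (8 / t) ^ 2 := by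
    rw [div_pow, htsq, hadef]
    field_simp
    ring
  have hsqrt : Real.sqrt a = 8 / t := by rw [ha8, Real.sqrt_sq (by positivity)]
  have hkey : (8 / t) ^ (d - 1) = a ^ (((d:ℝ) - 1) / 2) := by
    rw [← hsqrt, Real.sqrt_eq_rpow, ← Real.rpow_natCast (a ^ ((1:ℝ)/2)) (d - 1),
      ← Real.rpow_mul ha.le]
    congr 1
    rw [Nat.cast_sub (by omega : 1 ≤ d)]
    push_cast
    ring
  -- packing: any 2t-separated subset of the sphere has card ≤ n
  have hcard_bound : ∀ s : Finset (EuclideanSpace ℝ (Fin d)),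
      ↑s ⊆ Metric.sphere (0 : EuclideanSpace ℝ (Fin d)) 1 →
      (∀ x ∈ s, ∀ y ∈ s, x ≠ y → 2 * t ≤ dist x y) → s.card ≤ n := by
    intro s h1 h2
    have hpack := packing_card d (by omega) t ht (by linarith) s h1 h2
    have hmvt := aux_pow_sub_pow (1 + t) (1 - t) d (by linarith) (by linarith)
    have h2d : (2 * d : ℝ) ≤ 4 ^ (d - 1) := aux_two_mul_le d hd
    have hpow2 : (1 + t) ^ (d - 1) ≤ 2 ^ (d - 1) :=
      pow_le_pow_left₀ (by linarith) (by linarith) _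
    have htd : t ^ d = t ^ (d - 1) * t := by
      rw [← pow_succ]
      congr 1
      omega
    have hchain : (s.card : ℝ) * (t ^ (d - 1) * t) ≤ 8 ^ (d - 1) * t := by
      rw [← htd]
      calc (s.card : ℝ) * t ^ d ≤ (1 + t) ^ d - (1 - t) ^ d := hpack
        _ ≤ d * (1 + t) ^ (d - 1) * (1 + t - (1 - t)) := hmvt
        _ = 2 * d * (1 + t) ^ (d - 1) * t := by ring
        _ ≤ 4 ^ (d - 1) * 2 ^ (d - 1) * t := by
            apply mul_le_mul_of_nonneg_right _ ht.le
            have h1' : (0:ℝ) ≤ (1 + t) ^ (d-1) := by positivity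
            have h2' : (0:ℝ) ≤ 2 * d := by positivity
            calc 2 * (d:ℝ) * (1 + t) ^ (d - 1) ≤ 2 * d * 2 ^ (d - 1) :=
                  mul_le_mul_of_nonneg_left hpow2 h2'
              _ ≤ 4 ^ (d - 1) * 2 ^ (d - 1) :=
                  mul_le_mul_of_nonneg_right h2d (by positivity)
        _ = 8 ^ (d - 1) * t := by rw [← mul_pow]; norm_num
    have hchain2 : (s.card : ℝ) * t ^ (d - 1) ≤ 8 ^ (d - 1) := by
      rw [← mul_assoc] at hchain
      exact le_of_mul_le_mul_right hchain ht
    have hcardle : (s.card : ℝ) ≤ (8 / t) ^ (d - 1) := by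
      rw [div_pow, le_div_iff₀ (pow_pos ht _)]
      exact hchain2
    have : (s.card : ℝ) ≤ n := by
      calc (s.card : ℝ) ≤ (8 / t) ^ (d-1) := hcardle
        _ = a ^ (((d:ℝ) - 1) / 2) := hkey
        _ ≤ n := hn
    exact_mod_cast this
  -- get the net
  obtain ⟨S, hS1, hS2, _hS3, hS4⟩ := exists_net d (2 * t) (by linarith) n hcard_bound
  -- default unit vector
  set u0 : EuclideanSpace ℝ (Fin d) := EuclideanSpace.single (⟨0, by omega⟩ : Fin d) (1:ℝ)
    with hu0def
  have hu0 : u0 ∈ Metric.sphere (0 : EuclideanSpace ℝ (Fin d)) 1 := by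
    simp [hu0def, mem_sphere_iff_norm, EuclideanSpace.norm_single]
  -- the directions
  set w : Fin n → EuclideanSpace ℝ (Fin d) := fun i => S.toList.getD i u0 with hwdef
  have hw_sphere : ∀ i : Fin n, w i ∈ Metric.sphere (0 : EuclideanSpace ℝ (Fin d)) 1 := by
    intro i
    by_cases h : (i : ℕ) < S.toList.length
    · rw [hwdef]
      simp only
      rw [List.getD_eq_getElem S.toList u0 h]
      exact hS1 (Finset.mem_toList.1 (List.getElem_mem h))
    · rw [hwdef]
      simp only
      rw [List.getD_eq_default S.toList u0 (le_of_not_gt h)]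
      exact hu0
  have hw_surj : ∀ u ∈ S, ∃ i : Fin n, w i = u := by
    intro u hu
    have hu' : u ∈ S.toList := Finset.mem_toList.2 hu
    obtain ⟨j, hj, hju⟩ := List.mem_iff_getElem.1 hu'
    have hjn : j < n := by
      have := S.length_toList
      omega
    refine ⟨⟨j, hjn⟩, ?_⟩
    rw [hwdef]
    simp only
    rw [List.getD_eq_getElem S.toList u0 hj]
    exact hju
  -- conclusion
  refine ⟨w, fun _ => (1:ℝ), ?_, ?_⟩
  · intro x hx i
    have h1 : ‖w i‖ = 1 := by simpa using hw_sphere i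
    have hxn : ‖x‖ ≤ 1 := by simpa [dist_zero_right] using mem_closedBall.1 hx
    calc ⟪w i, x⟫ ≤ ‖w i‖ * ‖x‖ := real_inner_le_norm _ _
      _ = ‖x‖ := by rw [h1, one_mul]
      _ ≤ 1 := hxn
  · -- volume bound
    haveI : Nontrivial (EuclideanSpace ℝ (Fin d)) := by
      apply Module.nontrivial_of_finrank_pos (R := ℝ)
      rw [finrank_euclideanSpace_fin]; omega
    have hfr : Module.finrank ℝ (EuclideanSpace ℝ (Fin d)) = d := finrank_euclideanSpace_fin
    set s0 : ℝ := ε / (4 * d) with hs0def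
    have hs0 : 2 * t ^ 2 = s0 := by rw [htsq, hs0def]; field_simp; ring
    have hs0pos : 0 < s0 := by positivity
    have hs0le : s0 ≤ 1 / 8 := by
      rw [hs0def, div_le_div_iff₀ (by positivity) (by norm_num)]
      nlinarith
    set r : ℝ := (1 - s0)⁻¹ with hrdef
    have hpos : 0 < 1 - s0 := by linarith
    have hinv : (1 - s0) * r = 1 := mul_inv_cancel₀ hpos.ne'
    have hr0 : 0 < r := by rw [hrdef]; positivity
    have hr1 : 1 ≤ r := by
      have h1 : 1 * (1 - s0) ≤ r * (1 - s0) := by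
        rw [one_mul, mul_comm r (1 - s0), hinv]
        linarith
      exact le_of_mul_le_mul_right h1 hpos
    -- P ⊆ closedBall 0 r
    have hPsub : {x : EuclideanSpace ℝ (Fin d) | ∀ i, ⟪w i, x⟫ ≤ (1:ℝ)} ⊆
        closedBall (0 : EuclideanSpace ℝ (Fin d)) r := by
      intro x hx
      have hxS : ∀ u ∈ S, ⟪u, x⟫ ≤ 1 := by
        intro u hu
        obtain ⟨i, hi⟩ := hw_surj u hu
        rw [← hi]
        exact hx i
      have hg := geom_lemma d t S hS1 hS4 x hxS
      rw [hs0] at hg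
      rw [mem_closedBall, dist_zero_right]
      have h1 : ‖x‖ * (1 - s0) ≤ r * (1 - s0) := by
        rw [mul_comm r (1 - s0), hinv]
        exact hg
      exact le_of_mul_le_mul_right h1 hpos
    -- r ^ d ≤ 1 + ε
    have hrd : r ^ d ≤ 1 + ε := by
      have hrle : r ≤ 1 + 2 * s0 := by
        have h1 : r * (1 - s0) ≤ (1 + 2 * s0) * (1 - s0) := by
          rw [mul_comm r (1 - s0), hinv]
          nlinarith
        exact le_of_mul_le_mul_right h1 hpos
      have h2s0 : 2 * s0 = ε / (2 * d) := by rw [hs0def]; ring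
      have hbern : 1 - ε / 2 ≤ (1 - 2 * s0) ^ d := by
        have := one_add_mul_le_pow (a := -(2 * s0)) (by linarith) d
        have hds : (d : ℝ) * (2 * s0) = ε / 2 := by
          rw [h2s0]; field_simp
        calc 1 - ε / 2 = 1 + (d:ℝ) * (-(2 * s0)) := by rw [← hds]; ring
          _ ≤ (1 + -(2 * s0)) ^ d := this
          _ = (1 - 2 * s0) ^ d := by rw [← sub_eq_add_neg]
      have hprod : (1 + 2 * s0) ^ d * (1 - 2 * s0) ^ d ≤ 1 := by
        rw [← mul_pow]
        apply pow_le_one₀ (by nlinarith [hs0pos, hs0le]) (by nlinarith [hs0pos, hs0le])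
      have hhalf : 0 < 1 - ε / 2 := by linarith
      have hple : (1 + 2 * s0) ^ d * (1 - ε / 2) ≤ 1 := by
        calc (1 + 2 * s0) ^ d * (1 - ε / 2) ≤ (1 + 2 * s0) ^ d * (1 - 2 * s0) ^ d :=
              mul_le_mul_of_nonneg_left hbern (by positivity)
          _ ≤ 1 := hprod
      have h1e : (1 + 2 * s0) ^ d ≤ 1 + ε := by
        have h2 : (1:ℝ) ≤ (1 + ε) * (1 - ε / 2) := by nlinarith
        have h3 : (1 + 2 * s0) ^ d * (1 - ε / 2) ≤ (1 + ε) * (1 - ε / 2) := le_trans hple h2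
        exact le_of_mul_le_mul_right h3 hhalf
      calc r ^ d ≤ (1 + 2 * s0) ^ d := pow_le_pow_left₀ hr0.le hrle d
        _ ≤ 1 + ε := h1e
    -- measure computation
    set v : ENNReal := volume (ball (0 : EuclideanSpace ℝ (Fin d)) 1) with hvdef
    have hv0 : v ≠ 0 := (measure_ball_pos _ _ one_pos).ne'
    have hvtop : v ≠ ⊤ := measure_ball_lt_top.ne
    have hvol1 : volume (closedBall (0 : EuclideanSpace ℝ (Fin d)) 1) = v :=
      Measure.addHaar_closedBall_eq_addHaar_ball volume 0 1
    have hvolr : volume (closedBall (0 : EuclideanSpace ℝ (Fin d)) r)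
        = ENNReal.ofReal (r ^ d) * v := by
      rw [Measure.addHaar_closedBall volume _ hr0.le, hfr]
    have hdiff : volume (closedBall (0 : EuclideanSpace ℝ (Fin d)) r \
        closedBall (0 : EuclideanSpace ℝ (Fin d)) 1)
        = ENNReal.ofReal (r ^ d) * v - v := by
      rw [measure_diff (closedBall_subset_closedBall hr1)
        measurableSet_closedBall.nullMeasurableSet measure_closedBall_lt_top.ne,
        hvolr, hvol1]
    calc volume ({x : EuclideanSpace ℝ (Fin d) | ∀ i, ⟪w i, x⟫ ≤ (fun _ => (1:ℝ)) i} \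
          closedBall (0 : EuclideanSpace ℝ (Fin d)) 1)
        ≤ volume (closedBall (0 : EuclideanSpace ℝ (Fin d)) r \
            closedBall (0 : EuclideanSpace ℝ (Fin d)) 1) := by
          apply measure_mono
          apply Set.diff_subset_diff_left hPsub
      _ = ENNReal.ofReal (r ^ d) * v - v := hdiff
      _ ≤ ENNReal.ofReal ε * v := by
          rw [tsub_le_iff_right]
          calc ENNReal.ofReal (r ^ d) * v ≤ ENNReal.ofReal (1 + ε) * v := by
                exact mul_le_mul_left (ENNReal.ofReal_le_ofReal hrd) v
            _ = ENNReal.ofReal ε * v + v := by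
                rw [ENNReal.ofReal_add (by norm_num) hε0.le, add_mul, ENNReal.ofReal_one,
                  one_mul, add_comm]
      _ = ENNReal.ofReal ε * volume (closedBall (0 : EuclideanSpace ℝ (Fin d)) 1) := by
          rw [hvol1]
end

section
/- Let d ≥ 1 and let w : Fin m → EuclideanSpace ℝ (Fin d) with w i ≠ 0 for all i, and b : Fin m → ℝ, defining the affine hyperplanes H i = {x | ⟪w i, x⟫ = b i}. Then the number of connected components of the open set U = (⋃ i, H i)ᶜ satisfies Nat.card (ConnectedComponents ↥U) ≤ ∑ k in Finset.range (d+1), Nat.choose m k. -/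
open scoped RealInnerProductSpace

theorem hyperplane_region_count_upper_bound (d m : ℕ) (hd : 1 ≤ d)
    (w : Fin m → EuclideanSpace ℝ (Fin d)) (b : Fin m → ℝ)
    (hw : ∀ i, w i ≠ 0) :
    Nat.card (ConnectedComponents
        ↥((⋃ i, {x : EuclideanSpace ℝ (Fin d) | ⟪w i, x⟫ = b i})ᶜ)) ≤
      ∑ k ∈ Finset.range (d + 1), Nat.choose m k := by
  classical
  open Finset Topology in
  set U : Set (EuclideanSpace ℝ (Fin d)) :=
    (⋃ i, {x : EuclideanSpace ℝ (Fin d) | ⟪w i, x⟫ = b i})ᶜ with hU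
  have hmem : ∀ z, z ∈ U ↔ ∀ i, ⟪w i, z⟫ ≠ b i := by
    intro z; simp [hU, Set.mem_iUnion]
  set S : EuclideanSpace ℝ (Fin d) → Finset (Fin m) :=
    fun x => Finset.univ.filter (fun i => b i < ⟪w i, x⟫) with hS
  have hSmem : ∀ x i, i ∈ S x ↔ b i < ⟪w i, x⟫ := by
    intro x i; simp [hS]
  set 𝒜 : Finset (Finset (Fin m)) :=
    Finset.univ.filter (fun u => ∃ x ∈ U, S x = u) with h𝒜def
  have h𝒜 : ∀ u, u ∈ 𝒜 ↔ ∃ x ∈ U, S x = u := by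
    intro u; simp [h𝒜def]
  -- Step 1: same sign set implies same connected component
  have key : ∀ x (hx : x ∈ U) y (hy : y ∈ U), S x = S y →
      (ConnectedComponents.mk (⟨x, hx⟩ : U)) = ConnectedComponents.mk ⟨y, hy⟩ := by
    intro x hx y hy hSxy
    have hsgn : ∀ i, b i < ⟪w i, x⟫ ↔ b i < ⟪w i, y⟫ := by
      intro i
      rw [← hSmem x i, ← hSmem y i, hSxy]
    have hseg : segment ℝ x y ⊆ U := by
      intro z hz
      obtain ⟨a, c, ha, hc, hac, rfl⟩ := hz
      rw [hmem]
      intro i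
      have hzi : ⟪w i, a • x + c • y⟫ = a * ⟪w i, x⟫ + c * ⟪w i, y⟫ := by
        rw [inner_add_right, real_inner_smul_right, real_inner_smul_right]
      rw [hzi]
      have hxi := (hmem x).mp hx i
      have hyi := (hmem y).mp hy i
      rcases lt_or_gt_of_ne hxi with h1 | h1
      · have h2 : ⟪w i, y⟫ < b i := by
          rcases lt_or_gt_of_ne hyi with h | h
          · exact h
          · exact absurd ((hsgn i).mpr h) (not_lt.mpr h1.le)
        intro heq
        rcases eq_or_lt_of_le ha with ha0 | ha0
        · have hc1 : c = 1 := by linarith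
          rw [← ha0, hc1] at heq; simp at heq; exact hyi heq
        · have v1 : a * ⟪w i, x⟫ < a * b i := mul_lt_mul_of_pos_left h1 ha0
          have v2 : c * ⟪w i, y⟫ ≤ c * b i := mul_le_mul_of_nonneg_left h2.le hc
          have v3 : a * b i + c * b i = b i := by rw [← add_mul, hac, one_mul]
          linarith
      · have h2 : b i < ⟪w i, y⟫ := (hsgn i).mp h1
        intro heq
        rcases eq_or_lt_of_le ha with ha0 | ha0
        · have hc1 : c = 1 := by linarith
          rw [← ha0, hc1] at heq; simp at heq; exact hyi heq
        · have v1 : a * b i < a * ⟪w i, x⟫ := mul_lt_mul_of_pos_left h1 ha0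
          have v2 : c * b i ≤ c * ⟪w i, y⟫ := mul_le_mul_of_nonneg_left h2.le hc
          have v3 : a * b i + c * b i = b i := by rw [← add_mul, hac, one_mul]
          linarith
    have hpre : IsPreconnected ((Subtype.val : U → _) ⁻¹' segment ℝ x y) := by
      rw [← IsInducing.subtypeVal.isPreconnected_image, Subtype.image_preimage_coe,
        Set.inter_eq_self_of_subset_right hseg]
      exact (convex_segment x y).isPreconnected
    have hxm : (⟨x, hx⟩ : U) ∈ (Subtype.val : U → _) ⁻¹' segment ℝ x y :=
      left_mem_segment ℝ x y
    have hym : (⟨y, hy⟩ : U) ∈ (Subtype.val : U → _) ⁻¹' segment ℝ x y :=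
      right_mem_segment ℝ x y
    exact (ConnectedComponents.coe_eq_coe').mpr
      (hpre.subset_connectedComponent hym hxm)
  -- Step 2: components are counted by 𝒜
  have hsurj : ∃ F : {u // u ∈ 𝒜} → ConnectedComponents U, Function.Surjective F := by
    refine ⟨fun u => ConnectedComponents.mk
      ⟨((h𝒜 u.1).mp u.2).choose, ((h𝒜 u.1).mp u.2).choose_spec.1⟩, ?_⟩
    intro C
    obtain ⟨⟨x, hx⟩, rfl⟩ := ConnectedComponents.surjective_coe C
    have hs𝒜 : S x ∈ 𝒜 := (h𝒜 (S x)).mpr ⟨x, hx, rfl⟩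
    refine ⟨⟨S x, hs𝒜⟩, ?_⟩
    exact key _ _ x hx ((h𝒜 (S x)).mp hs𝒜).choose_spec.2
  obtain ⟨F, hF⟩ := hsurj
  have hcount : Nat.card (ConnectedComponents U) ≤ 𝒜.card := by
    calc Nat.card (ConnectedComponents U) ≤ Nat.card {u // u ∈ 𝒜} :=
          Nat.card_le_card_of_surjective F hF
      _ = 𝒜.card := Nat.card_eq_finsetCard 𝒜
  -- Step 3: VC dimension of 𝒜 is at most d
  have hshat : ∀ s : Finset (Fin m), 𝒜.Shatters s → s.card ≤ d := by
    intro s hs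
    by_contra hlt
    push_neg at hlt
    obtain ⟨t, hts, htcard⟩ := Finset.exists_subset_card_eq (show d + 1 ≤ s.card from hlt)
    have ht : 𝒜.Shatters t := hs.mono_right hts
    have hnli : ¬ LinearIndependent ℝ (fun i : t => w i) := by
      intro h
      have := h.fintype_card_le_finrank
      rw [finrank_euclideanSpace_fin, Fintype.card_coe, htcard] at this
      omega
    obtain ⟨c, hc0, i0, hi0⟩ := Fintype.not_linearIndependent_iff.mp hnli
    set g : Fin m → ℝ := fun i => if h : i ∈ t then c ⟨i, h⟩ else 0 with hg
    have hgsum : ∑ i ∈ t, g i • w i = 0 := by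
      rw [← Finset.sum_attach t (fun i => g i • w i)]
      rw [← hc0]
      refine Finset.sum_congr rfl fun i _ => ?_
      simp [hg, i.2]
    have hgi0 : g (i0 : Fin m) ≠ 0 := by simpa [hg, i0.2] using hi0
    set γ : ℝ := ∑ i ∈ t, g i * b i with hγ
    have main : ∀ t' ⊆ t, ∃ x ∈ U, (∀ i ∈ t, (b i < ⟪w i, x⟫ ↔ i ∈ t')) := by
      intro t' ht'
      obtain ⟨u, hu, htu⟩ := ht ht'
      obtain ⟨x, hxU, hSx⟩ := (h𝒜 u).mp hu
      refine ⟨x, hxU, fun i hi => ?_⟩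
      rw [← hSmem x i, hSx]
      constructor
      · intro hiu; rw [← htu]; exact Finset.mem_inter.mpr ⟨hi, hiu⟩
      · intro hit'; exact (Finset.mem_inter.mp (htu ▸ hit' : i ∈ t ∩ u)).2
    have sumid : ∀ x, ∑ i ∈ t, g i * (⟪w i, x⟫ - b i) = -γ := by
      intro x
      have h1 : ⟪(∑ i ∈ t, g i • w i), x⟫ = ∑ i ∈ t, g i * ⟪w i, x⟫ := by
        rw [sum_inner]
        exact Finset.sum_congr rfl fun i _ => real_inner_smul_left _ _ _
      rw [hgsum, inner_zero_left] at h1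
      simp only [mul_sub, Finset.sum_sub_distrib, ← h1, hγ]
      ring
    rcases le_or_gt 0 γ with hγ0 | hγ0
    · obtain ⟨x, hxU, hpat⟩ := main (t.filter (fun i => 0 < g i)) (Finset.filter_subset _ _)
      have hterm : ∀ i ∈ t, 0 ≤ g i * (⟪w i, x⟫ - b i) := by
        intro i hi
        rcases lt_trichotomy (g i) 0 with h | h | h
        · have : ¬ (b i < ⟪w i, x⟫) := by
            rw [hpat i hi]; simp [hi]; linarith
          have hne := (hmem x).mp hxU i
          have : ⟪w i, x⟫ - b i < 0 := by
            rcases lt_or_gt_of_ne hne with h' | h'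
            · linarith
            · exact absurd h' this
          exact (mul_pos_of_neg_of_neg h this).le
        · simp [h]
        · have hy : b i < ⟪w i, x⟫ := (hpat i hi).mpr (by simp [hi, h])
          have : 0 < ⟪w i, x⟫ - b i := by linarith
          exact (mul_pos h this).le
      have hstrict : 0 < g (i0 : Fin m) * (⟪w ↑i0, x⟫ - b ↑i0) := by
        rcases lt_or_gt_of_ne hgi0 with h | h
        · have : ¬ (b ↑i0 < ⟪w ↑i0, x⟫) := by
            rw [hpat ↑i0 i0.2]; simp [i0.2]; linarith
          have hne := (hmem x).mp hxU ↑i0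
          have h2 : ⟪w ↑i0, x⟫ - b ↑i0 < 0 := by
            rcases lt_or_gt_of_ne hne with h' | h'
            · linarith
            · exact absurd h' this
          exact mul_pos_of_neg_of_neg h h2
        · have : b ↑i0 < ⟪w ↑i0, x⟫ := (hpat ↑i0 i0.2).mpr (by simp [i0.2, h])
          have h2 : 0 < ⟪w ↑i0, x⟫ - b ↑i0 := by linarith
          exact mul_pos h h2
      have hsumpos : 0 < ∑ i ∈ t, g i * (⟪w i, x⟫ - b i) :=
        Finset.sum_pos' hterm ⟨↑i0, i0.2, hstrict⟩
      rw [sumid x] at hsumpos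
      linarith
    · obtain ⟨x, hxU, hpat⟩ := main (t.filter (fun i => g i < 0)) (Finset.filter_subset _ _)
      have hterm : ∀ i ∈ t, g i * (⟪w i, x⟫ - b i) ≤ 0 := by
        intro i hi
        rcases lt_trichotomy (g i) 0 with h | h | h
        · have : b i < ⟪w i, x⟫ := (hpat i hi).mpr (by simp [hi, h])
          have h2 : 0 < ⟪w i, x⟫ - b i := by linarith
          exact (mul_neg_of_neg_of_pos h h2).le
        · simp [h]
        · have : ¬ (b i < ⟪w i, x⟫) := by
            rw [hpat i hi]; simp [hi]; linarith
          have hne := (hmem x).mp hxU i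
          have h2 : ⟪w i, x⟫ - b i < 0 := by
            rcases lt_or_gt_of_ne hne with h' | h'
            · linarith
            · exact absurd h' this
          exact (mul_neg_of_pos_of_neg h h2).le
      have hstrict : g (i0 : Fin m) * (⟪w ↑i0, x⟫ - b ↑i0) < 0 := by
        rcases lt_or_gt_of_ne hgi0 with h | h
        · have : b ↑i0 < ⟪w ↑i0, x⟫ := (hpat ↑i0 i0.2).mpr (by simp [i0.2, h])
          have h2 : 0 < ⟪w ↑i0, x⟫ - b ↑i0 := by linarith
          exact mul_neg_of_neg_of_pos h h2
        · have : ¬ (b ↑i0 < ⟪w ↑i0, x⟫) := by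
            rw [hpat ↑i0 i0.2]; simp [i0.2]; linarith
          have hne := (hmem x).mp hxU ↑i0
          have h2 : ⟪w ↑i0, x⟫ - b ↑i0 < 0 := by
            rcases lt_or_gt_of_ne hne with h' | h'
            · linarith
            · exact absurd h' this
          exact mul_neg_of_pos_of_neg h h2
      have hsumneg : ∑ i ∈ t, g i * (⟪w i, x⟫ - b i) < 0 := by
        calc ∑ i ∈ t, g i * (⟪w i, x⟫ - b i)
            < ∑ i ∈ t, (0:ℝ) := Finset.sum_lt_sum hterm ⟨↑i0, i0.2, hstrict⟩
          _ = 0 := by simp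
      rw [sumid x] at hsumneg
      linarith
  have hvc : 𝒜.vcDim ≤ d := by
    refine Finset.sup_le fun s hs => ?_
    exact hshat s (Finset.mem_shatterer.mp hs)
  -- Step 4: Sauer-Shelah
  calc Nat.card (ConnectedComponents U) ≤ 𝒜.card := hcount
    _ ≤ 𝒜.shatterer.card := Finset.card_le_card_shatterer 𝒜
    _ ≤ ∑ k ∈ Finset.Iic 𝒜.vcDim, (Fintype.card (Fin m)).choose k :=
        Finset.card_shatterer_le_sum_vcDim
    _ ≤ ∑ k ∈ Finset.range (d + 1), Nat.choose m k := by
        rw [Fintype.card_fin]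
        refine Finset.sum_le_sum_of_subset fun k hk => ?_
        rw [Finset.mem_Iic] at hk
        rw [Finset.mem_range]
        omega
end

section
/- Let d ≥ 1 and let w : Fin m → EuclideanSpace ℝ (Fin d), b : Fin m → ℝ define affine hyperplanes H i = {x | ⟪w i, x⟫ = b i} in general position, meaning: (i) for every s : Finset (Fin m) with s.card ≤ d, the family of vectors (w i)_{i ∈ s} is linearly independent, and (ii) for every s : Finset (Fin m) with s.card = d + 1, ⋂ i ∈ s, H i = ∅. Then the number of connected components of U = (⋃ i, H i)ᶜ equals exactly ∑ k in Finset.range (d+1), Nat.choose m k. -/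
open scoped RealInnerProductSpace
open Finset

variable {E : Type} [NormedAddCommGroup E] [InnerProductSpace ℝ E]

def cellGP {m : ℕ} (w : Fin m → E) (b : Fin m → ℝ) (σ : Fin m → Bool) : Set E :=
  {x | ∀ i, if σ i then b i < ⟪w i, x⟫ else ⟪w i, x⟫ < b i}

theorem isOpen_cellGP {m : ℕ} (w : Fin m → E) (b : Fin m → ℝ) (σ : Fin m → Bool) :
    IsOpen (cellGP w b σ) := by
  have : cellGP w b σ = ⋂ i, {x : E | if σ i then b i < ⟪w i, x⟫ else ⟪w i, x⟫ < b i} := by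
    rw [cellGP, Set.setOf_forall]
  rw [this]
  refine isOpen_iInter_of_finite fun i => ?_
  have hc : Continuous fun x : E => ⟪w i, x⟫ := continuous_const.inner continuous_id
  cases h : σ i <;> simp only [h, Bool.false_eq_true, if_true, if_false]
  · exact isOpen_lt hc continuous_const
  · exact isOpen_lt continuous_const hc

theorem convex_cellGP {m : ℕ} (w : Fin m → E) (b : Fin m → ℝ) (σ : Fin m → Bool) :
    Convex ℝ (cellGP w b σ) := by
  have : cellGP w b σ = ⋂ i, {x : E | if σ i then b i < ⟪w i, x⟫ else ⟪w i, x⟫ < b i} := by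
    rw [cellGP, Set.setOf_forall]
  rw [this]
  refine convex_iInter fun i => ?_
  have hl : IsLinearMap ℝ fun x : E => ⟪w i, x⟫ :=
    ⟨fun x y => inner_add_right _ _ _, fun c x => real_inner_smul_right _ _ _⟩
  cases h : σ i <;> simp only [h, Bool.false_eq_true, if_true, if_false]
  · exact convex_halfSpace_lt hl (b i)
  · exact convex_halfSpace_gt hl (b i)

theorem cellGP_subset {m : ℕ} (w : Fin m → E) (b : Fin m → ℝ) (σ : Fin m → Bool) :
    cellGP w b σ ⊆ (⋃ i, {x : E | ⟪w i, x⟫ = b i})ᶜ := by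
  intro x hx
  simp only [Set.mem_compl_iff, Set.mem_iUnion, Set.mem_setOf_eq, not_exists]
  intro i hi
  have := hx i
  cases h : σ i <;> simp only [h, Bool.false_eq_true, if_true, if_false] at this <;>
    rw [hi] at this <;> exact lt_irrefl _ this

theorem mem_cellGP_decide {m : ℕ} (w : Fin m → E) (b : Fin m → ℝ) {x : E}
    (hx : x ∈ (⋃ i, {x : E | ⟪w i, x⟫ = b i})ᶜ) :
    x ∈ cellGP w b (fun i => decide (b i < ⟪w i, x⟫)) := by
  intro i
  simp only [Set.mem_compl_iff, Set.mem_iUnion, Set.mem_setOf_eq, not_exists] at hx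
  have hne : ⟪w i, x⟫ ≠ b i := hx i
  by_cases h : b i < ⟪w i, x⟫
  · simp [h]
  · simp only [h, decide_eq_false h, Bool.false_eq_true, if_false]
    exact lt_of_le_of_ne (not_lt.mp h) hne

theorem cellGP_eq_of_mem {m : ℕ} {w : Fin m → E} {b : Fin m → ℝ} {σ τ : Fin m → Bool} {x : E}
    (hσ : x ∈ cellGP w b σ) (hτ : x ∈ cellGP w b τ) : σ = τ := by
  funext i
  have h1 := hσ i; have h2 := hτ i
  cases hs : σ i <;> cases ht : τ i <;>
      simp only [hs, ht, Bool.false_eq_true, if_true, if_false] at h1 h2 ⊢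
  · exact absurd h2 (not_lt.mpr h1.le)
  · exact absurd h1 (not_lt.mpr h2.le)

theorem card_components_eq {m : ℕ} (w : Fin m → E) (b : Fin m → ℝ) :
    Nat.card (ConnectedComponents ↥((⋃ i, {x : E | ⟪w i, x⟫ = b i})ᶜ)) =
      Nat.card {σ : Fin m → Bool // (cellGP w b σ).Nonempty} := by
  set U := (⋃ i, {x : E | ⟪w i, x⟫ = b i})ᶜ with hU
  let S : (Fin m → Bool) → Set ↥U := fun σ => Subtype.val ⁻¹' cellGP w b σ
  have hSopen : ∀ σ, IsOpen (S σ) := fun σ =>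
    (isOpen_cellGP w b σ).preimage continuous_subtype_val
  have hmem : ∀ x : ↥U, x ∈ S (fun i => decide (b i < ⟪w i, (x : E)⟫)) := fun x =>
    mem_cellGP_decide w b x.2
  have hSmem : ∀ {σ} {x : ↥U}, x ∈ S σ → (x : E) ∈ cellGP w b σ := fun h => h
  have hclosed : ∀ σ, IsClosed (S σ) := by
    intro σ
    rw [← isOpen_compl_iff]
    have hcompl : (S σ)ᶜ = ⋃ τ ∈ {τ | τ ≠ σ}, S τ := by
      ext z; constructor
      · intro hz
        refine Set.mem_biUnion (fun hEq : _ = σ => hz ?_) (hmem z)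
        rw [← hEq]; exact hmem z
      · intro hz hzσ
        obtain ⟨τ, hτ, hzτ⟩ := Set.mem_iUnion₂.mp hz
        exact hτ (cellGP_eq_of_mem (hSmem hzτ) (hSmem hzσ))
    rw [hcompl]
    exact isOpen_biUnion fun τ _ => hSopen τ
  have hkey : ∀ (σ : Fin m → Bool) (x y : ↥U), x ∈ S σ → y ∈ S σ →
      (ConnectedComponents.mk x = ConnectedComponents.mk y) := by
    intro σ x y hx hy
    have hpre : IsPreconnected (S σ) := by
      have himg : Subtype.val '' (S σ) = cellGP w b σ := by
        apply Set.Subset.antisymm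
        · rintro _ ⟨z, hz, rfl⟩; exact hz
        · intro z hz; exact ⟨⟨z, cellGP_subset w b σ hz⟩, hz, rfl⟩
      rw [← Topology.IsInducing.subtypeVal.isPreconnected_image, himg]
      exact (convex_cellGP w b σ).isPreconnected
    rw [ConnectedComponents.coe_eq_coe]
    exact (connectedComponent_eq (hpre.subset_connectedComponent hy hx)).symm
  classical
  let pt : {σ : Fin m → Bool // (cellGP w b σ).Nonempty} → ↥U := fun σ =>
    ⟨σ.2.choose, cellGP_subset w b σ.1 σ.2.choose_spec⟩
  have hpt : ∀ σ, (pt σ : E) ∈ cellGP w b σ.1 := fun σ => σ.2.choose_spec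
  let g : {σ : Fin m → Bool // (cellGP w b σ).Nonempty} → ConnectedComponents ↥U :=
    fun σ => ConnectedComponents.mk (pt σ)
  have hginj : Function.Injective g := by
    intro σ τ h
    have hcc : connectedComponent (pt σ) = connectedComponent (pt τ) :=
      ConnectedComponents.coe_eq_coe.mp h
    have hclop : IsClopen (S τ.1) := ⟨hclosed τ.1, hSopen τ.1⟩
    have hsub : connectedComponent (pt τ) ⊆ S τ.1 :=
      hclop.connectedComponent_subset (hpt τ)
    have hστ : (pt σ : E) ∈ cellGP w b τ.1 :=
      hSmem (hsub (hcc ▸ mem_connectedComponent))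
    exact Subtype.ext (cellGP_eq_of_mem (hpt σ) hστ)
  have hgsurj : Function.Surjective g := by
    intro c
    obtain ⟨x, rfl⟩ := ConnectedComponents.surjective_coe c
    refine ⟨⟨fun i => decide (b i < ⟪w i, (x : E)⟫), ⟨x, hmem x⟩⟩, ?_⟩
    exact hkey _ _ x (hpt _) (hmem x)
  exact (Nat.card_eq_of_bijective g ⟨hginj, hgsurj⟩).symm

theorem mem_cellGP_cons {m : ℕ} (w : Fin (m + 1) → E) (b : Fin (m + 1) → ℝ)
    (s : Bool) (σ' : Fin m → Bool) (x : E) :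
    x ∈ cellGP w b (Fin.cons s σ') ↔
      (if s then b 0 < ⟪w 0, x⟫ else ⟪w 0, x⟫ < b 0) ∧
        x ∈ cellGP (w ∘ Fin.succ) (b ∘ Fin.succ) σ' := by
  constructor
  · intro h
    refine ⟨by simpa using h 0, fun i => by simpa using h i.succ⟩
  · rintro ⟨h0, h1⟩ i
    refine Fin.cases ?_ (fun j => ?_) i
    · simpa using h0
    · simpa using h1 j

/-- perturbation: from a point of an open set, move along `w 0` to get any strict sign. -/
theorem perturb_sign {m : ℕ} (w : Fin (m + 1) → E) (b : Fin (m + 1) → ℝ) (hw0 : w 0 ≠ 0)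
    (σ' : Fin m → Bool) {x : E} (hx : x ∈ cellGP (w ∘ Fin.succ) (b ∘ Fin.succ) σ')
    (hx0 : ⟪w 0, x⟫ = b 0) (s : Bool) :
    ∃ y ∈ cellGP (w ∘ Fin.succ) (b ∘ Fin.succ) σ',
      if s then b 0 < ⟪w 0, y⟫ else ⟪w 0, y⟫ < b 0 := by
  obtain ⟨ε, hε, hball⟩ := Metric.isOpen_iff.mp
    (isOpen_cellGP (w ∘ Fin.succ) (b ∘ Fin.succ) σ') x hx
  have hn : (0 : ℝ) < ‖w 0‖ := norm_pos_iff.mpr hw0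
  set δ : ℝ := ε / (2 * ‖w 0‖) with hδdef
  have hδ : 0 < δ := by positivity
  set c : ℝ := if s then δ else -δ with hcdef
  refine ⟨x + c • w 0, ?_, ?_⟩
  · apply hball
    rw [Metric.mem_ball, dist_eq_norm]
    have : x + c • w 0 - x = c • w 0 := by abel
    rw [this, norm_smul]
    have hc : |c| = δ := by cases s <;> simp [hcdef, abs_of_pos hδ, abs_of_neg, hδ.le]
    rw [Real.norm_eq_abs, hc]
    have hring : δ * ‖w 0‖ = ε / 2 := by
      rw [hδdef]; field_simp
    rw [hring]
    linarith
  · have hinner : ⟪w 0, x + c • w 0⟫ = b 0 + c * ‖w 0‖ ^ 2 := by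
      rw [inner_add_right, real_inner_smul_right, hx0, real_inner_self_eq_norm_sq]
    cases s <;> simp only [hcdef, if_true, if_false, Bool.false_eq_true] at hinner ⊢ <;>
      rw [hinner] <;> linarith [mul_pos hδ (pow_pos hn 2)]

theorem ivt_cell {m : ℕ} (w : Fin (m + 1) → E) (b : Fin (m + 1) → ℝ) (σ' : Fin m → Bool)
    {x y : E} (hx : x ∈ cellGP (w ∘ Fin.succ) (b ∘ Fin.succ) σ')
    (hy : y ∈ cellGP (w ∘ Fin.succ) (b ∘ Fin.succ) σ')
    (hxlt : ⟪w 0, x⟫ < b 0) (hylt : b 0 < ⟪w 0, y⟫) :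
    ∃ z ∈ cellGP (w ∘ Fin.succ) (b ∘ Fin.succ) σ', ⟪w 0, z⟫ = b 0 := by
  set f : ℝ → ℝ := fun t => ⟪w 0, x + t • (y - x)⟫ with hf
  have hfc : ContinuousOn f (Set.Icc (0:ℝ) 1) := by
    apply Continuous.continuousOn
    exact (continuous_const.inner (continuous_const.add (continuous_id.smul continuous_const)))
  have hf0 : f 0 = ⟪w 0, x⟫ := by simp [hf]
  have hf1 : f 1 = ⟪w 0, y⟫ := by simp [hf]
  have hb : b 0 ∈ Set.Icc (f 0) (f 1) := by
    rw [hf0, hf1]; exact ⟨hxlt.le, hylt.le⟩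
  obtain ⟨t, ht, hft⟩ := intermediate_value_Icc zero_le_one hfc hb
  refine ⟨x + t • (y - x), ?_, hft⟩
  have hseg : x + t • (y - x) = (1 - t) • x + t • y := by
    rw [sub_smul, smul_sub, one_smul]; abel
  rw [hseg]
  exact convex_cellGP _ _ σ' hx hy (by linarith [ht.2]) ht.1 (by ring)

open scoped Classical in
theorem ext_card {m : ℕ} (w : Fin (m + 1) → E) (b : Fin (m + 1) → ℝ) (hw0 : w 0 ≠ 0)
    (σ' : Fin m → Bool) :
    Nat.card {s : Bool // (cellGP w b (Fin.cons s σ')).Nonempty} =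
      (if (cellGP (w ∘ Fin.succ) (b ∘ Fin.succ) σ').Nonempty then 1 else 0) +
      (if ((cellGP (w ∘ Fin.succ) (b ∘ Fin.succ) σ') ∩ {x : E | ⟪w 0, x⟫ = b 0}).Nonempty
        then 1 else 0) := by
  classical
  by_cases hF : (cellGP (w ∘ Fin.succ) (b ∘ Fin.succ) σ').Nonempty
  · by_cases hM : ((cellGP (w ∘ Fin.succ) (b ∘ Fin.succ) σ') ∩
        {x : E | ⟪w 0, x⟫ = b 0}).Nonempty
    · have hboth : ∀ s : Bool, (cellGP w b (Fin.cons s σ')).Nonempty := by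
        intro s
        obtain ⟨x, hx, hx0⟩ := hM
        obtain ⟨y, hy, hys⟩ := perturb_sign w b hw0 σ' hx hx0 s
        exact ⟨y, (mem_cellGP_cons w b s σ' y).mpr ⟨hys, hy⟩⟩
      rw [if_pos hF, if_pos hM]
      rw [Nat.card_congr (Equiv.subtypeUnivEquiv hboth)]
      simp [Nat.card_eq_fintype_card]
    · rw [if_pos hF, if_neg hM]
      obtain ⟨x, hx⟩ := hF
      have hone : ∃ s, (cellGP w b (Fin.cons s σ')).Nonempty := by
        by_cases h0 : ⟪w 0, x⟫ = b 0
        · obtain ⟨y, hy, hys⟩ := perturb_sign w b hw0 σ' hx h0 true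
          exact ⟨true, y, (mem_cellGP_cons w b true σ' y).mpr ⟨hys, hy⟩⟩
        · rcases lt_or_gt_of_ne h0 with h | h
          · exact ⟨false, x, (mem_cellGP_cons w b false σ' x).mpr ⟨by simpa using h, hx⟩⟩
          · exact ⟨true, x, (mem_cellGP_cons w b true σ' x).mpr ⟨by simpa using h, hx⟩⟩
      obtain ⟨s0, hs0⟩ := hone
      have huniq : ∀ s, (cellGP w b (Fin.cons s σ')).Nonempty → s = s0 := by
        intro s hs
        by_contra hne
        have hT : (cellGP w b (Fin.cons true σ')).Nonempty := by
          cases s <;> cases s0 <;> simp_all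
        have hFc : (cellGP w b (Fin.cons false σ')).Nonempty := by
          cases s <;> cases s0 <;> simp_all
        obtain ⟨y, hy⟩ := hT; obtain ⟨z, hz⟩ := hFc
        rw [mem_cellGP_cons] at hy hz
        obtain ⟨u, hu, hu0⟩ := ivt_cell w b σ' hz.2 hy.2 (by simpa using hz.1)
          (by simpa using hy.1)
        exact hM ⟨u, hu, hu0⟩
      rw [Nat.card_eq_one_iff_unique]
      exact ⟨⟨fun a c => Subtype.ext ((huniq _ a.2).trans (huniq _ c.2).symm)⟩, ⟨⟨s0, hs0⟩⟩⟩
  · have hM : ¬ ((cellGP (w ∘ Fin.succ) (b ∘ Fin.succ) σ') ∩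
        {x : E | ⟪w 0, x⟫ = b 0}).Nonempty := fun ⟨x, hx, _⟩ => hF ⟨x, hx⟩
    rw [if_neg hF, if_neg hM]
    haveI : IsEmpty {s : Bool // (cellGP w b (Fin.cons s σ')).Nonempty} :=
      ⟨fun ⟨s, x, hx⟩ => hF ⟨x, ((mem_cellGP_cons w b s σ' x).mp hx).2⟩⟩
    exact Nat.card_of_isEmpty

theorem card_feasible_succ {m : ℕ} (w : Fin (m + 1) → E) (b : Fin (m + 1) → ℝ)
    (hw0 : w 0 ≠ 0) :
    Nat.card {σ : Fin (m + 1) → Bool // (cellGP w b σ).Nonempty} =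
      Nat.card {σ' : Fin m → Bool //
          (cellGP (w ∘ Fin.succ) (b ∘ Fin.succ) σ').Nonempty} +
      Nat.card {σ' : Fin m → Bool //
          ((cellGP (w ∘ Fin.succ) (b ∘ Fin.succ) σ') ∩ {x : E | ⟪w 0, x⟫ = b 0}).Nonempty} := by
  classical
  let e : {σ : Fin (m + 1) → Bool // (cellGP w b σ).Nonempty} ≃
      Σ σ' : Fin m → Bool, {s : Bool // (cellGP w b (Fin.cons s σ')).Nonempty} :=
    { toFun := fun σ => ⟨Fin.tail σ.1, σ.1 0, by
        rw [Fin.cons_self_tail]; exact σ.2⟩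
      invFun := fun x => ⟨Fin.cons x.2.1 x.1, x.2.2⟩
      left_inv := fun σ => Subtype.ext (Fin.cons_self_tail σ.1)
      right_inv := by
        rintro ⟨σ', s, hs⟩
        refine Sigma.ext (by simp) ((Subtype.heq_iff_coe_eq ?_).mpr (by simp))
        intro x
        simp [Fin.tail_cons] }
  rw [Nat.card_congr e, Nat.card_eq_fintype_card, Fintype.card_sigma]
  have hterm : ∀ σ' : Fin m → Bool,
      Fintype.card {s : Bool // (cellGP w b (Fin.cons s σ')).Nonempty} =
        (if (cellGP (w ∘ Fin.succ) (b ∘ Fin.succ) σ').Nonempty then 1 else 0) +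
        (if ((cellGP (w ∘ Fin.succ) (b ∘ Fin.succ) σ') ∩ {x : E | ⟪w 0, x⟫ = b 0}).Nonempty
          then 1 else 0) := by
    intro σ'
    rw [← Nat.card_eq_fintype_card, ext_card w b hw0 σ']
  rw [Finset.sum_congr rfl fun σ' _ => hterm σ', Finset.sum_add_distrib]
  congr 1
  · rw [Nat.card_eq_fintype_card, Fintype.card_subtype, Finset.card_filter]
  · rw [Nat.card_eq_fintype_card, Fintype.card_subtype, Finset.card_filter]

section Restriction

variable [FiniteDimensional ℝ E]

theorem inner_orthProj (W : Submodule ℝ E) (u : E) (v : W) :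
    ⟪(Submodule.orthogonalProjection W u : W), v⟫ = ⟪u, (v : E)⟫ := by
  rw [Submodule.coe_inner]
  have h0 : ⟪(v : E), u - (Submodule.orthogonalProjection W u : E)⟫ = 0 :=
    (Submodule.mem_orthogonal W _).mp (Submodule.sub_starProjection_mem_orthogonal u) v v.2
  have h1 : ⟪u - (Submodule.orthogonalProjection W u : E), (v : E)⟫ = 0 :=
    (real_inner_comm _ _).trans h0
  rw [inner_sub_left] at h1
  linarith [h1]

theorem transfer_indep {m d : ℕ} (w : Fin (m + 1) → E) (hw0 : w 0 ≠ 0)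
    (h_indep : ∀ s : Finset (Fin (m + 1)), s.card ≤ d + 1 →
      LinearIndependent ℝ (fun i : s => w (i : Fin (m + 1))))
    (s : Finset (Fin m)) (hs : s.card ≤ d) :
    LinearIndependent ℝ
      (fun i : s => (Submodule.orthogonalProjection ((ℝ ∙ w 0)ᗮ) (w (i : Fin m).succ))) := by
  set W : Submodule ℝ E := (ℝ ∙ w 0)ᗮ with hW
  set t : Finset (Fin (m + 1)) := insert 0 (s.image Fin.succ) with ht
  have h0t : (0 : Fin (m + 1)) ∉ s.image Fin.succ := by
    simp [Fin.succ_ne_zero]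
  have htcard : t.card = s.card + 1 := by
    rw [ht, Finset.card_insert_of_notMem h0t,
      Finset.card_image_of_injective _ (Fin.succ_injective m)]
  have hti := h_indep t (by omega)
  have hmem : ∀ i : s, ((i : Fin m).succ) ∈ t := fun i => by
    rw [ht]
    exact Finset.mem_insert_of_mem (Finset.mem_image_of_mem _ i.2)
  have hsub : LinearIndependent ℝ (fun i : s => w (i : Fin m).succ) := by
    have := hti.comp (fun i : s => (⟨(i : Fin m).succ, hmem i⟩ : t))
      (fun i j hij => by
        apply Subtype.ext
        exact Fin.succ_injective m (congrArg Subtype.val hij))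
    exact this
  have hker : LinearMap.ker (Submodule.orthogonalProjection W).toLinearMap = Wᗮ := by
    exact Submodule.ker_orthogonalProjection
  have hWW : Wᗮ = (ℝ ∙ w 0) := Submodule.orthogonal_orthogonal _
  have hnotmem : w 0 ∉ Submodule.span ℝ (Set.range (fun i : s => w (i : Fin m).succ)) := by
    intro hmem0
    have hx : (⟨0, Finset.mem_insert_self _ _⟩ : t) ∉ {j : t | (j : Fin (m + 1)) ≠ 0} := by simp
    have hns := hti.notMem_span_image hx
    apply hns
    refine Submodule.span_mono ?_ hmem0
    rintro _ ⟨i, rfl⟩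
    exact ⟨⟨(i : Fin m).succ, hmem i⟩, Fin.succ_ne_zero _, rfl⟩
  have hdisj : Disjoint
      (Submodule.span ℝ (Set.range (fun i : s => w (i : Fin m).succ)))
      (LinearMap.ker (Submodule.orthogonalProjection W).toLinearMap) := by
    rw [hker, hWW, Submodule.disjoint_def]
    intro z hz hz0
    obtain ⟨c, rfl⟩ := Submodule.mem_span_singleton.mp hz0
    by_contra hne
    have hc : c ≠ 0 := fun h => hne (by simp [h])
    apply hnotmem
    have := Submodule.smul_mem _ c⁻¹ hz
    rwa [inv_smul_smul₀ hc] at this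
  exact hsub.map hdisj

theorem transfer_empty {m d : ℕ} (w : Fin (m + 1) → E) (b : Fin (m + 1) → ℝ)
    (p : E) (hp : ⟪w 0, p⟫ = b 0)
    (h_empty : ∀ s : Finset (Fin (m + 1)), s.card = d + 2 →
      (⋂ i ∈ s, {x : E | ⟪w i, x⟫ = b i}) = ∅)
    (s : Finset (Fin m)) (hs : s.card = d + 1) :
    (⋂ i ∈ s, {v : ((ℝ ∙ w 0)ᗮ : Submodule ℝ E) |
        ⟪(Submodule.orthogonalProjection ((ℝ ∙ w 0)ᗮ) (w (i : Fin m).succ) : ((ℝ ∙ w 0)ᗮ : Submodule ℝ E)), v⟫ =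
        b (i : Fin m).succ - ⟪w (i : Fin m).succ, p⟫}) = ∅ := by
  set W : Submodule ℝ E := (ℝ ∙ w 0)ᗮ with hW
  by_contra hne
  obtain ⟨v, hv⟩ := Set.nonempty_iff_ne_empty.mpr hne
  set t : Finset (Fin (m + 1)) := insert 0 (s.image Fin.succ) with ht
  have h0t : (0 : Fin (m + 1)) ∉ s.image Fin.succ := by
    simp [Fin.succ_ne_zero]
  have htcard : t.card = d + 2 := by
    rw [ht, Finset.card_insert_of_notMem h0t,
      Finset.card_image_of_injective _ (Fin.succ_injective m), hs]
  have hx : (p + (v : E)) ∈ ⋂ i ∈ t, {x : E | ⟪w i, x⟫ = b i} := by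
    rw [Set.mem_iInter₂]
    intro i hi
    rw [ht, Finset.mem_insert] at hi
    rcases hi with rfl | hi
    · have hv0 : ⟪w 0, (v : E)⟫ = 0 :=
        Submodule.mem_orthogonal_singleton_iff_inner_right.mp v.2
      simp only [Set.mem_setOf_eq, inner_add_right, hp, hv0, add_zero]
    · obtain ⟨j, hj, rfl⟩ := Finset.mem_image.mp hi
      have hvj := Set.mem_iInter₂.mp hv j hj
      rw [Set.mem_setOf_eq, inner_orthProj] at hvj
      simp only [Set.mem_setOf_eq, inner_add_right]
      linarith [hvj]
  rw [h_empty t htcard] at hx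
  exact hx

theorem cell_corr {m : ℕ} (w : Fin (m + 1) → E) (b : Fin (m + 1) → ℝ)
    (p : E) (hp : ⟪w 0, p⟫ = b 0) (σ' : Fin m → Bool) :
    ((cellGP (w ∘ Fin.succ) (b ∘ Fin.succ) σ') ∩ {x : E | ⟪w 0, x⟫ = b 0}).Nonempty ↔
      (cellGP (fun i : Fin m => (Submodule.orthogonalProjection ((ℝ ∙ w 0)ᗮ) (w i.succ) :
          ((ℝ ∙ w 0)ᗮ : Submodule ℝ E)))
        (fun i : Fin m => b i.succ - ⟪w i.succ, p⟫) σ').Nonempty := by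
  set W : Submodule ℝ E := (ℝ ∙ w 0)ᗮ with hW
  constructor
  · rintro ⟨x, hx, hx0⟩
    rw [Set.mem_setOf_eq] at hx0
    have hvmem : x - p ∈ W := by
      rw [hW, Submodule.mem_orthogonal_singleton_iff_inner_right, inner_sub_right, hx0, hp,
        sub_self]
    refine ⟨⟨x - p, hvmem⟩, fun i => ?_⟩
    have hxi := hx i
    have hkey : ⟪(Submodule.orthogonalProjection W (w i.succ) : W), (⟨x - p, hvmem⟩ : W)⟫ =
        ⟪w i.succ, x⟫ - ⟪w i.succ, p⟫ := by
      rw [inner_orthProj]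
      simp [inner_sub_right]
    simp only [Function.comp_apply] at hxi
    cases h : σ' i <;> simp only [h, Bool.false_eq_true, if_true, if_false] at hxi ⊢ <;>
      rw [hkey] <;> linarith [hxi]
  · rintro ⟨v, hv⟩
    refine ⟨p + (v : E), fun i => ?_, ?_⟩
    · have hvi := hv i
      have hkey : ⟪w i.succ, p + (v : E)⟫ = ⟪w i.succ, p⟫ +
          ⟪(Submodule.orthogonalProjection W (w i.succ) : W), v⟫ := by
        rw [inner_orthProj, inner_add_right]
      simp only [Function.comp_apply]
      cases h : σ' i <;> simp only [h, Bool.false_eq_true, if_true, if_false] at hvi ⊢ <;>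
        rw [hkey] <;> linarith [hvi]
    · rw [Set.mem_setOf_eq]
      have hv0 : ⟪w 0, (v : E)⟫ = 0 :=
        Submodule.mem_orthogonal_singleton_iff_inner_right.mp v.2
      rw [inner_add_right, hp, hv0, add_zero]

end Restriction

theorem sum_choose_zero (d : ℕ) : ∑ k ∈ Finset.range (d + 1), Nat.choose 0 k = 1 := by
  induction d with
  | zero => simp
  | succ d ih => rw [Finset.sum_range_succ, ih]; simp

theorem pascal_sum (d m : ℕ) :
    ∑ k ∈ Finset.range (d + 2), Nat.choose (m + 1) k =
      ∑ k ∈ Finset.range (d + 2), Nat.choose m k +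
        ∑ k ∈ Finset.range (d + 1), Nat.choose m k := by
  have h1 : ∑ k ∈ Finset.range (d + 2), Nat.choose (m + 1) k =
      ∑ k ∈ Finset.range (d + 1), Nat.choose (m + 1) (k + 1) + Nat.choose (m + 1) 0 :=
    Finset.sum_range_succ' _ _
  have h2 : ∑ k ∈ Finset.range (d + 2), Nat.choose m k =
      ∑ k ∈ Finset.range (d + 1), Nat.choose m (k + 1) + Nat.choose m 0 :=
    Finset.sum_range_succ' _ _
  have h3 : ∑ k ∈ Finset.range (d + 1), Nat.choose (m + 1) (k + 1) =
      ∑ k ∈ Finset.range (d + 1), (Nat.choose m k + Nat.choose m (k + 1)) :=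
    Finset.sum_congr rfl fun k _ => Nat.choose_succ_succ _ _
  rw [h1, h3, Finset.sum_add_distrib, h2]
  simp only [Nat.choose_zero_right]
  omega

theorem countGP (m : ℕ) : ∀ (d : ℕ) (E : Type) [NormedAddCommGroup E]
    [InnerProductSpace ℝ E] [FiniteDimensional ℝ E],
    Module.finrank ℝ E = d → ∀ (w : Fin m → E) (b : Fin m → ℝ),
    (∀ s : Finset (Fin m), s.card ≤ d → LinearIndependent ℝ (fun i : s => w (i : Fin m))) →
    (∀ s : Finset (Fin m), s.card = d + 1 → (⋂ i ∈ s, {x : E | ⟪w i, x⟫ = b i}) = ∅) →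
    Nat.card {σ : Fin m → Bool // (cellGP w b σ).Nonempty} =
      ∑ k ∈ Finset.range (d + 1), Nat.choose m k := by
  induction m with
  | zero =>
    intro d E _ _ _ hdim w b _ _
    have h1 : Nat.card {σ : Fin 0 → Bool // (cellGP w b σ).Nonempty} = 1 := by
      rw [Nat.card_eq_one_iff_unique]
      exact ⟨⟨fun a c => Subtype.ext (Subsingleton.elim _ _)⟩,
        ⟨⟨fun i => i.elim0, ⟨0, fun i => i.elim0⟩⟩⟩⟩
    rw [h1, sum_choose_zero d]
  | succ m ih =>
    intro d E _ _ _ hdim w b h_indep h_empty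
    match d with
    | 0 =>
      have hall : ∀ x : E, x = 0 := finrank_zero_iff_forall_zero.mp hdim
      have hinner : ∀ (i : Fin (m + 1)) (x : E), ⟪w i, x⟫ = 0 := by
        intro i x
        rw [hall x, inner_zero_right]
      have hbne : ∀ i, b i ≠ 0 := by
        intro i hb
        have h := h_empty {i} (by simp)
        have h0 : (0 : E) ∈ ⋂ j ∈ ({i} : Finset (Fin (m + 1))), {x : E | ⟪w j, x⟫ = b j} := by
          simp only [Finset.mem_singleton, Set.mem_iInter]
          rintro j rfl
          rw [Set.mem_setOf_eq, hinner, hb]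
        rw [h] at h0
        exact h0
      have h1 : Nat.card {σ : Fin (m + 1) → Bool // (cellGP w b σ).Nonempty} = 1 := by
        rw [Nat.card_eq_one_iff_unique]
        constructor
        · constructor
          rintro ⟨σ, x, hx⟩ ⟨τ, y, hy⟩
          have hxy : x = y := (hall x).trans (hall y).symm
          exact Subtype.ext (cellGP_eq_of_mem hx (hxy ▸ hy))
        · refine ⟨⟨fun i => decide (b i < 0), ⟨0, fun i => ?_⟩⟩⟩
          by_cases h : b i < 0
          · simp only [decide_eq_true h, if_true]
            rw [hinner]
            exact h
          · simp only [decide_eq_false h, Bool.false_eq_true, if_false]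
            rw [hinner]
            exact lt_of_le_of_ne (not_lt.mp h) (Ne.symm (hbne i))
      rw [h1]
      simp
    | d' + 1 =>
      have hw0 : w 0 ≠ 0 := by
        have h := h_indep {0} (by simp)
        exact h.ne_zero ⟨0, Finset.mem_singleton_self 0⟩
      have hn : (0 : ℝ) < ‖w 0‖ := norm_pos_iff.mpr hw0
      rw [card_feasible_succ w b hw0]
      have hIH1 : Nat.card {σ' : Fin m → Bool //
          (cellGP (w ∘ Fin.succ) (b ∘ Fin.succ) σ').Nonempty} =
          ∑ k ∈ Finset.range (d' + 2), Nat.choose m k := by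
        apply ih (d' + 1) E hdim
        · intro s hs
          have h := h_indep (s.image Fin.succ)
            (by rw [Finset.card_image_of_injective _ (Fin.succ_injective m)]; exact hs)
          exact h.comp (fun i : s => ⟨(i : Fin m).succ, Finset.mem_image_of_mem _ i.2⟩)
            (fun i j hij => Subtype.ext
              (Fin.succ_injective m (congrArg Subtype.val hij)))
        · intro s hs
          have h := h_empty (s.image Fin.succ)
            (by rw [Finset.card_image_of_injective _ (Fin.succ_injective m)]; omega)
          rw [← h, Finset.set_biInter_finset_image]
          rfl
      set p : E := (b 0 / ‖w 0‖ ^ 2) • w 0 with hpdef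
      have hp : ⟪w 0, p⟫ = b 0 := by
        rw [hpdef, real_inner_smul_right, real_inner_self_eq_norm_sq]
        field_simp
      have hcongr : Nat.card {σ' : Fin m → Bool //
          ((cellGP (w ∘ Fin.succ) (b ∘ Fin.succ) σ') ∩ {x : E | ⟪w 0, x⟫ = b 0}).Nonempty} =
          Nat.card {σ' : Fin m → Bool //
            (cellGP (fun i : Fin m => (Submodule.orthogonalProjection ((ℝ ∙ w 0)ᗮ) (w i.succ) :
                ((ℝ ∙ w 0)ᗮ : Submodule ℝ E)))
              (fun i : Fin m => b i.succ - ⟪w i.succ, p⟫) σ').Nonempty} :=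
        Nat.card_congr (Equiv.subtypeEquivRight (fun σ' => cell_corr w b p hp σ'))
      have hWdim : Module.finrank ℝ ((ℝ ∙ w 0)ᗮ : Submodule ℝ E) = d' := by
        have h1 : Module.finrank ℝ (ℝ ∙ w 0 : Submodule ℝ E) = 1 := finrank_span_singleton hw0
        have h2 := Submodule.finrank_add_finrank_orthogonal (K := (ℝ ∙ w 0 : Submodule ℝ E))
        omega
      have hIH2 := ih d' ((ℝ ∙ w 0)ᗮ : Submodule ℝ E) hWdim
        (fun i : Fin m => (Submodule.orthogonalProjection ((ℝ ∙ w 0)ᗮ) (w i.succ) :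
          ((ℝ ∙ w 0)ᗮ : Submodule ℝ E)))
        (fun i : Fin m => b i.succ - ⟪w i.succ, p⟫)
        (fun s hs => transfer_indep w hw0 h_indep s hs)
        (fun s hs => transfer_empty (d := d') w b p hp (fun t ht => h_empty t (by omega)) s hs)
      rw [hIH1, hcongr, hIH2, pascal_sum]

theorem hyperplane_region_count_general_position (d m : ℕ) (hd : 1 ≤ d)
    (w : Fin m → EuclideanSpace ℝ (Fin d)) (b : Fin m → ℝ)
    (h_indep : ∀ s : Finset (Fin m), s.card ≤ d →
      LinearIndependent ℝ (fun i : s => w (i : Fin m)))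
    (h_empty : ∀ s : Finset (Fin m), s.card = d + 1 →
      (⋂ i ∈ s, {x : EuclideanSpace ℝ (Fin d) | ⟪w i, x⟫ = b i}) = ∅) :
    Nat.card (ConnectedComponents
        ↥((⋃ i, {x : EuclideanSpace ℝ (Fin d) | ⟪w i, x⟫ = b i})ᶜ)) =
      ∑ k ∈ Finset.range (d + 1), Nat.choose m k := by
  rw [card_components_eq w b]
  exact countGP m d (EuclideanSpace ℝ (Fin d)) (finrank_euclideanSpace_fin) w b h_indep h_empty
end

section
/- Let d, m ≥ 1 and let f : EuclideanSpace ℝ (Fin d) → ℝ be a single-hidden-layer rectifier network, f x = (∑ i, a i · max 0 (⟪w i, x⟫ + b i)) + c, with parameters a, b : Fin m → ℝ, w : Fin m → EuclideanSpace ℝ (Fin d), c : ℝ. Then there exist N ≤ ∑ k in Finset.range (d+1), Nat.choose m k and sets S : Fin N → Set (EuclideanSpace ℝ (Fin d)) such that each S j is convex, ⋃ j, S j = Set.univ, and for each j there exists a continuous affine map g j : EuclideanSpace ℝ (Fin d) →ᵃ[ℝ] ℝ with f x = g j x for all x ∈ S j. -/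
open scoped RealInnerProductSpace
open Module

namespace SHLaux

variable {V : Type} [AddCommGroup V] [Module ℝ V]

/-- evaluation commutes with finite sums of affine maps into ℝ -/
lemma affine_sum_apply {α : Type*} (s : Finset α) (F : α → V →ᵃ[ℝ] ℝ) (x : V) :
    (∑ i ∈ s, F i) x = ∑ i ∈ s, F i x := by
  induction s using Finset.cons_induction with
  | empty => simp
  | cons a s ha ih => simp [Finset.sum_cons, AffineMap.coe_add, ih]

/-- the realizable strict sign patterns of a family of affine functionals -/
def Realizable {n : ℕ} (g : Fin n → V →ᵃ[ℝ] ℝ) (ε : Fin n → Bool) : Prop :=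
  ∃ x : V, ∀ i, g i x ≠ 0 ∧ (0 < g i x ↔ ε i = true)

lemma seg_zero (φ : V →ᵃ[ℝ] ℝ) {x y : V} (hx : 0 < φ x) (hy : φ y < 0) :
    ∃ t : ℝ, t ∈ Set.Icc (0:ℝ) 1 ∧ φ (AffineMap.lineMap y x t) = 0 := by
  have hne : φ x - φ y ≠ 0 := by linarith
  refine ⟨(-φ y) / (φ x - φ y), ⟨?_, ?_⟩, ?_⟩
  · apply div_nonneg <;> linarith
  · rw [div_le_one (by linarith)]; linarith
  · rw [AffineMap.apply_lineMap, AffineMap.lineMap_apply_module]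
    simp only [smul_eq_mul]
    field_simp
    ring

lemma seg_sign (φ : V →ᵃ[ℝ] ℝ) {x y : V} {t : ℝ} (ht : t ∈ Set.Icc (0:ℝ) 1) :
    (0 < φ x → 0 < φ y → 0 < φ (AffineMap.lineMap y x t)) ∧
    (φ x < 0 → φ y < 0 → φ (AffineMap.lineMap y x t) < 0) := by
  obtain ⟨ht0, ht1⟩ := ht
  rw [AffineMap.apply_lineMap, AffineMap.lineMap_apply_module]
  simp only [smul_eq_mul]
  constructor <;> intro h1 h2 <;> rcases lt_or_eq_of_le ht1 with h | h
  · nlinarith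
  · rw [h]; simpa using h1
  · nlinarith
  · rw [h]; simpa using h1

lemma affine_sub (f : V →ᵃ[ℝ] ℝ) (z z0 : V) : f z - f z0 = f.linear (z - z0) := by
  simpa using (AffineMap.linearMap_vsub f z z0).symm

/-- the key counting lemma: the number of realizable strict sign patterns of `n`
affine functionals on a space of dimension at most `d` is at most `∑_{k ≤ d} C(n,k)`. -/
lemma key (n : ℕ) : ∀ (d : ℕ) (V : Type) [AddCommGroup V] [Module ℝ V]
    [FiniteDimensional ℝ V], finrank ℝ V ≤ d →
    ∀ g : Fin n → V →ᵃ[ℝ] ℝ,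
    {ε | Realizable g ε}.ncard ≤ ∑ k ∈ Finset.range (d+1), n.choose k := by
  induction n with
  | zero =>
    intro d V _ _ _ _ g
    have h1 : {ε : Fin 0 → Bool | Realizable g ε} ⊆ Set.univ := Set.subset_univ _
    have h2 : (Set.univ : Set (Fin 0 → Bool)).ncard = 1 := by
      rw [Set.ncard_univ, Nat.card_eq_one_iff_unique]
      exact ⟨⟨fun ε ε' => funext fun i => i.elim0⟩, ⟨fun i => i.elim0⟩⟩
    have h3 : 1 ≤ ∑ k ∈ Finset.range (d+1), Nat.choose 0 k := by
      have := Finset.single_le_sum (f := fun k => Nat.choose 0 k)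
        (fun k _ => Nat.zero_le _) (Finset.mem_range.mpr (Nat.succ_pos d))
      simpa using this
    calc {ε : Fin 0 → Bool | Realizable g ε}.ncard
        ≤ (Set.univ : Set (Fin 0 → Bool)).ncard := Set.ncard_le_ncard h1 (Set.toFinite _)
      _ = 1 := h2
      _ ≤ _ := h3
  | succ n IH =>
    intro d V _ _ _ hV g
    classical
    rcases Nat.eq_zero_or_pos d with rfl | hdpos
    · -- dimension 0 : the space is a single point, at most one pattern
      have hs : Subsingleton V := finrank_zero_iff.mp (Nat.le_zero.mp hV)
      have hsub : {ε : Fin (n+1) → Bool | Realizable g ε}.Subsingleton := by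
        rintro ε ⟨x, hx⟩ ε' ⟨x', hx'⟩
        have hxx : x = x' := Subsingleton.elim x x'
        funext i
        have h1 := (hx i).2
        have h2 := (hx' i).2
        rw [hxx] at h1
        have : (ε i = true) ↔ (ε' i = true) := h1.symm.trans h2
        cases hb : ε i <;> cases hb' : ε' i <;> simp_all
      have h3 : 1 ≤ ∑ k ∈ Finset.range (0+1), Nat.choose (n+1) k := by simp
      have h4 : {ε : Fin (n+1) → Bool | Realizable g ε}.ncard ≤ 1 :=
        (Set.ncard_le_one_iff (Set.toFinite _)).mpr (fun ha hb => hsub ha hb)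
      exact le_trans h4 h3
    · obtain ⟨d', rfl⟩ := Nat.exists_eq_succ_of_ne_zero hdpos.ne'
      set gl := g (Fin.last n) with hgl
      set g0 : Fin n → V →ᵃ[ℝ] ℝ := fun i => g i.castSucc with hg0
      set S := {ε | Realizable g ε} with hS
      set T := {ε' | Realizable g0 ε'} with hT
      set D := {ε' | Realizable g (Fin.snoc ε' true) ∧ Realizable g (Fin.snoc ε' false)}
        with hD
      -- restriction of a realizable pattern is realizable
      have hinit : ∀ ε ∈ S, Fin.init ε ∈ T := by
        rintro ε ⟨x, hx⟩
        exact ⟨x, fun i => hx i.castSucc⟩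
      -- Claim A : |S| ≤ |T| + |D|
      have hA : S.ncard ≤ T.ncard + D.ncard := by
        rw [← Nat.card_coe_set_eq, ← Nat.card_coe_set_eq,
          ← Nat.card_coe_set_eq, ← Nat.card_sum]
        have hinj : Function.Injective
            (fun ε : S => if h : (Fin.init ε.1 ∈ D) ∧ ε.1 (Fin.last n) = true
              then (Sum.inr ⟨Fin.init ε.1, h.1⟩ : T ⊕ D)
              else Sum.inl ⟨Fin.init ε.1, hinit ε.1 ε.2⟩) := by
          rintro ⟨ε, hε⟩ ⟨ε', hε'⟩ h
          have hsnoc : Fin.snoc (Fin.init ε) (ε (Fin.last n)) = ε := Fin.snoc_init_self ε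
          have hsnoc' : Fin.snoc (Fin.init ε') (ε' (Fin.last n)) = ε' := Fin.snoc_init_self ε'
          apply Subtype.ext
          show ε = ε'
          by_cases c1 : (Fin.init ε ∈ D) ∧ ε (Fin.last n) = true <;>
            by_cases c2 : (Fin.init ε' ∈ D) ∧ ε' (Fin.last n) = true
          · simp only [dif_pos c1, dif_pos c2, Sum.inr.injEq, Subtype.mk.injEq] at h
            rw [← hsnoc, ← hsnoc', h, c1.2, c2.2]
          · simp only [dif_pos c1, dif_neg c2] at h
            exact absurd h (by simp)
          · simp only [dif_neg c1, dif_pos c2] at h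
            exact absurd h (by simp)
          · simp only [dif_neg c1, dif_neg c2, Sum.inl.injEq, Subtype.mk.injEq] at h
            by_cases hmem : Fin.init ε ∈ D
            · have hb : ε (Fin.last n) = false := by
                by_contra hb
                exact c1 ⟨hmem, by simpa using hb⟩
              have hb' : ε' (Fin.last n) = false := by
                by_contra hb'
                exact c2 ⟨h ▸ hmem, by simpa using hb'⟩
              rw [← hsnoc, ← hsnoc', h, hb, hb']
            · by_cases hlast : ε (Fin.last n) = ε' (Fin.last n)
              · rw [← hsnoc, ← hsnoc', h, hlast]
              · exfalso
                apply hmem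
                cases hb : ε (Fin.last n) <;> cases hb' : ε' (Fin.last n) <;>
                  rw [hb, hb'] at hlast <;> try exact absurd rfl hlast
                · exact ⟨by rw [h, ← hb', hsnoc']; exact hε', by rw [← hb, hsnoc]; exact hε⟩
                · exact ⟨by rw [← hb, hsnoc]; exact hε, by rw [h, ← hb', hsnoc']; exact hε'⟩
        exact Nat.card_le_card_of_injective _ hinj
      -- Claim B : |T| ≤ G(d, n)
      have hB : T.ncard ≤ ∑ k ∈ Finset.range (d'+1+1), n.choose k := IH (d'+1) V hV g0
      -- Claim C : |D| ≤ G(d-1, n)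
      have hC : D.ncard ≤ ∑ k ∈ Finset.range (d'+1), n.choose k := by
        rcases Set.eq_empty_or_nonempty D with hDe | ⟨ε0, hε0⟩
        · simp [hDe]
        · -- extract a point on the last hyperplane and signs from any element of D
          have hwit : ∀ ε' ∈ D, ∃ z : V, gl z = 0 ∧
              ∀ i : Fin n, g0 i z ≠ 0 ∧ (0 < g0 i z ↔ ε' i = true) := by
            rintro ε' ⟨⟨x, hx⟩, ⟨y, hy⟩⟩
            have hglx : 0 < gl x := by
              have := hx (Fin.last n)
              rw [Fin.snoc_last] at this
              exact this.2.mpr rfl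
            have hgly : gl y < 0 := by
              have := hy (Fin.last n)
              rw [Fin.snoc_last] at this
              exact lt_of_le_of_ne (not_lt.mp (fun h => by simpa using this.2.mp h)) this.1
            obtain ⟨t, ht, hz⟩ := seg_zero gl hglx hgly
            refine ⟨AffineMap.lineMap y x t, hz, fun i => ?_⟩
            have hxi := hx i.castSucc
            have hyi := hy i.castSucc
            rw [Fin.snoc_castSucc] at hxi hyi
            obtain ⟨hseg1, hseg2⟩ := seg_sign (g0 i) (x := x) (y := y) ht
            cases hb : ε' i
            · rw [hb] at hxi hyi
              have hx0 : g0 i x < 0 :=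
                lt_of_le_of_ne (not_lt.mp (fun h => by simpa using hxi.2.mp h)) hxi.1
              have hy0 : g0 i y < 0 :=
                lt_of_le_of_ne (not_lt.mp (fun h => by simpa using hyi.2.mp h)) hyi.1
              have := hseg2 hx0 hy0
              exact ⟨ne_of_lt this, iff_of_false (not_lt.mpr this.le) (by simp)⟩
            · rw [hb] at hxi hyi
              have hx0 : 0 < g0 i x := hxi.2.mpr rfl
              have hy0 : 0 < g0 i y := hyi.2.mpr rfl
              have := hseg1 hx0 hy0
              exact ⟨ne_of_gt this, iff_of_true this rfl⟩
          -- the last linear functional is nonzero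
          have hlin : gl.linear ≠ 0 := by
            obtain ⟨⟨x, hx⟩, ⟨y, hy⟩⟩ := hε0
            have hglx : 0 < gl x := by
              have := hx (Fin.last n); rw [Fin.snoc_last] at this; exact this.2.mpr rfl
            have hgly : gl y < 0 := by
              have := hy (Fin.last n); rw [Fin.snoc_last] at this
              exact lt_of_le_of_ne (not_lt.mp (fun h => by simpa using this.2.mp h)) this.1
            intro h0
            have : gl x - gl y = 0 := by rw [affine_sub, h0]; simp
            linarith
          obtain ⟨z0, hz0, -⟩ := hwit ε0 hε0
          have hW : finrank ℝ (LinearMap.ker gl.linear) ≤ d' := by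
            have h1 := LinearMap.finrank_range_add_finrank_ker gl.linear
            have h2 : 0 < finrank ℝ (LinearMap.range gl.linear) := by
              rw [finrank_pos_iff]
              exact Submodule.nontrivial_iff_ne_bot.mpr
                (by simpa [LinearMap.range_eq_bot] using hlin)
            omega
          set W := LinearMap.ker gl.linear with hWdef
          let aff : W →ᵃ[ℝ] V :=
            { toFun := fun u => z0 + u.1
              linear := W.subtype
              map_vadd' := by
                intro p v
                show z0 + ((v + p : W) : V) = (v : V) + (z0 + (p : V))
                push_cast
                abel }
          set g' : Fin n → W →ᵃ[ℝ] ℝ := fun i => (g0 i).comp aff with hg'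
          have hDsub : D ⊆ {ε' | Realizable g' ε'} := by
            intro ε' hε'
            obtain ⟨z, hz, hsig⟩ := hwit ε' hε'
            have hker : z - z0 ∈ W := by
              rw [hWdef, LinearMap.mem_ker, ← affine_sub, hz, hz0, sub_zero]
            refine ⟨⟨z - z0, hker⟩, fun i => ?_⟩
            have : g' i ⟨z - z0, hker⟩ = g0 i z := by
              show g0 i (z0 + (z - z0)) = g0 i z
              rw [add_sub_cancel]
            rw [this]
            exact hsig i
          exact (Set.ncard_le_ncard hDsub (Set.toFinite _)).trans (IH d' W hW g')
      -- Pascal identity for the partial sums of binomial coefficients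
      have hP : ∑ k ∈ Finset.range (d'+1+1), (n+1).choose k =
          (∑ k ∈ Finset.range (d'+1+1), n.choose k) + ∑ k ∈ Finset.range (d'+1), n.choose k := by
        rw [Finset.sum_range_succ' (fun k => (n+1).choose k) (d'+1)]
        simp only [Nat.choose_succ_succ, Nat.choose_zero_right]
        rw [Finset.sum_add_distrib]
        rw [Finset.sum_range_succ' (fun k => n.choose k) (d'+1)]
        simp only [Nat.choose_zero_right]
        ring
      rw [hP]
      calc S.ncard ≤ T.ncard + D.ncard := hA
        _ ≤ _ := Nat.add_le_add hB hC

end SHLaux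

open scoped RealInnerProductSpace

theorem shl_rectifier_piecewise_affine (d m : ℕ) (hd : 1 ≤ d) (hm : 1 ≤ m)
    (a b : Fin m → ℝ) (w : Fin m → EuclideanSpace ℝ (Fin d)) (c : ℝ)
    (f : EuclideanSpace ℝ (Fin d) → ℝ)
    (hf : ∀ x, f x = (∑ i, a i * max 0 (⟪w i, x⟫ + b i)) + c) :
    ∃ N : ℕ, N ≤ ∑ k ∈ Finset.range (d + 1), Nat.choose m k ∧
      ∃ S : Fin N → Set (EuclideanSpace ℝ (Fin d)),
        (∀ j, Convex ℝ (S j)) ∧ (⋃ j, S j) = Set.univ ∧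
        ∀ j, ∃ g : EuclideanSpace ℝ (Fin d) →ᵃ[ℝ] ℝ, ∀ x ∈ S j, f x = g x := by
  classical
  -- the affine functionals of the hidden units
  let gA : Fin m → EuclideanSpace ℝ (Fin d) →ᵃ[ℝ] ℝ := fun i =>
    { toFun := fun x => ⟪w i, x⟫ + b i
      linear := ((innerSL ℝ (w i)) : EuclideanSpace ℝ (Fin d) →L[ℝ] ℝ).toLinearMap
      map_vadd' := by
        intro p v
        show ⟪w i, v + p⟫ + b i = ⟪w i, v⟫ + (⟪w i, p⟫ + b i)
        rw [inner_add_right]; ring }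
  have hgA : ∀ i x, gA i x = ⟪w i, x⟫ + b i := fun i x => rfl
  -- the hyperplane units
  let ι := {i : Fin m // w i ≠ 0}
  let n := Fintype.card ι
  let e : Fin n ≃ ι := (Fintype.equivFin ι).symm
  let g : Fin n → EuclideanSpace ℝ (Fin d) →ᵃ[ℝ] ℝ := fun j => gA (e j).1
  let R := {ε : Fin n → Bool | SHLaux.Realizable g ε}
  let N := R.ncard
  have hfinr : Module.finrank ℝ (EuclideanSpace ℝ (Fin d)) ≤ d :=
    le_of_eq finrank_euclideanSpace_fin
  have hNbound : N ≤ ∑ k ∈ Finset.range (d+1), Nat.choose m k := by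
    refine le_trans (SHLaux.key n d _ hfinr g) ?_
    have hnm : n ≤ m := by
      have h := Fintype.card_subtype_le (fun i : Fin m => w i ≠ 0)
      rwa [Fintype.card_fin] at h
    exact Finset.sum_le_sum fun k _ => Nat.choose_le_choose k hnm
  -- the (closed) cells
  let Cell : (Fin n → Bool) → Set (EuclideanSpace ℝ (Fin d)) := fun ε =>
    ⋂ j, (g j) ⁻¹' (if ε j = true then Set.Ici 0 else Set.Iic 0)
  have hconv : ∀ ε, Convex ℝ (Cell ε) := by
    intro ε
    refine convex_iInter fun j => ?_
    split_ifs
    · exact Convex.affine_preimage (g j) (convex_Ici 0)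
    · exact Convex.affine_preimage (g j) (convex_Iic 0)
  -- coverage: every point lies in the cell of some realizable pattern
  have hcover : ∀ x, ∃ ε, ε ∈ R ∧ x ∈ Cell ε := by
    intro x
    -- a direction transverse to all hyperplanes
    obtain ⟨v, hv⟩ : ∃ v : EuclideanSpace ℝ (Fin d), ∀ j : Fin n, ⟪w (e j).1, v⟫ ≠ 0 := by
      by_contra hcon
      push_neg at hcon
      have hcov : ⋃ j : Fin n,
          (↑(LinearMap.ker (((innerSL ℝ (w (e j).1)) :
            EuclideanSpace ℝ (Fin d) →L[ℝ] ℝ).toLinearMap)) : Set (EuclideanSpace ℝ (Fin d)))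
            = Set.univ := by
        ext u
        simp only [Set.mem_iUnion, Set.mem_univ, iff_true]
        obtain ⟨j, hj⟩ := hcon u
        exact ⟨j, by simpa [LinearMap.mem_ker] using hj⟩
      obtain ⟨j, hj⟩ := Subspace.exists_eq_top_of_iUnion_eq_univ hcov
      have hz : ⟪w (e j).1, w (e j).1⟫ = 0 := by
        have h0 := LinearMap.ker_eq_top.mp hj
        have := congrFun (congrArg (fun (φ : EuclideanSpace ℝ (Fin d) →ₗ[ℝ] ℝ) =>
          (φ : EuclideanSpace ℝ (Fin d) → ℝ)) h0) (w (e j).1)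
        simpa using this
      exact (e j).2 (inner_self_eq_zero.mp hz)
    set L : Fin n → ℝ := fun j => ⟪w (e j).1, v⟫ with hL
    have hlinval : ∀ (j : Fin n) (t : ℝ), g j (x + t • v) = g j x + t * L j := by
      intro j t
      show ⟪w (e j).1, x + t • v⟫ + b (e j).1 = (⟪w (e j).1, x⟫ + b (e j).1) + t * L j
      rw [inner_add_right, real_inner_smul_right]; ring
    -- a positive step size small enough
    let hfun : Fin n → ℝ := fun j => if g j x = 0 then 1 else |g j x| / (2 * |L j|)
    have hpos : ∀ j, 0 < hfun j := by
      intro j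
      dsimp only [hfun]
      split_ifs with h
      · norm_num
      · have h2 : 0 < |L j| := abs_pos.mpr (hv j)
        have h1 : 0 < |g j x| := abs_pos.mpr h
        positivity
    let F : Finset ℝ := insert 1 (Finset.image hfun Finset.univ)
    have hFne : F.Nonempty := ⟨1, Finset.mem_insert_self _ _⟩
    set t := F.min' hFne with htdef
    have ht_pos : 0 < t := by
      have hmem := F.min'_mem hFne
      rcases Finset.mem_insert.mp hmem with h | h
      · rw [htdef, h]; norm_num
      · obtain ⟨j, _, hj⟩ := Finset.mem_image.mp h
        rw [htdef, ← hj]; exact hpos j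
    have ht_le : ∀ j, t ≤ hfun j := fun j =>
      F.min'_le _ (Finset.mem_insert_of_mem (Finset.mem_image_of_mem _ (Finset.mem_univ j)))
    -- the signs at the perturbed point
    have hy : ∀ j, g j (x + t • v) ≠ 0 ∧
        (g j x ≠ 0 → (0 < g j (x + t • v) ↔ 0 < g j x)) := by
      intro j
      rcases eq_or_ne (g j x) 0 with h0 | h0
      · constructor
        · rw [hlinval, h0, zero_add]
          exact mul_ne_zero (ne_of_gt ht_pos) (hv j)
        · intro h; exact absurd h0 h
      · have h2 : 0 < |L j| := abs_pos.mpr (hv j)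
        have h1 : t ≤ |g j x| / (2 * |L j|) := by
          have := ht_le j
          simpa only [hfun, if_neg h0] using this
        have hlt : t * |L j| < |g j x| := by
          have h3 : t * |L j| ≤ (|g j x| / (2 * |L j|)) * |L j| :=
            mul_le_mul_of_nonneg_right h1 h2.le
          have h4 : (|g j x| / (2 * |L j|)) * |L j| = |g j x| / 2 := by
            field_simp
          have h5 : 0 < |g j x| := abs_pos.mpr h0
          calc t * |L j| ≤ |g j x| / 2 := h4 ▸ h3
            _ < |g j x| := by linarith
        have habs : |t * L j| < |g j x| := by
          rw [abs_mul, abs_of_pos ht_pos]; exact hlt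
        rw [abs_lt] at habs
        constructor
        · rw [hlinval]
          rcases lt_or_gt_of_ne h0 with hneg | hposx
          · rw [abs_of_neg hneg] at habs
            intro hzero; linarith
          · rw [abs_of_pos hposx] at habs
            intro hzero; linarith
        · intro _
          rw [hlinval]
          rcases lt_or_gt_of_ne h0 with hneg | hposx
          · rw [abs_of_neg hneg] at habs
            constructor
            · intro hcc; linarith
            · intro hcc; linarith
          · rw [abs_of_pos hposx] at habs
            constructor
            · intro _; exact hposx
            · intro _; linarith
    refine ⟨fun j => decide (0 < g j (x + t • v)),
      ⟨x + t • v, fun j => ⟨(hy j).1, by simp⟩⟩, ?_⟩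
    refine Set.mem_iInter.mpr fun j => ?_
    rcases eq_or_ne (g j x) 0 with h0 | h0
    · split_ifs <;> simp [Set.mem_preimage, h0]
    · have hiff := (hy j).2 h0
      split_ifs with hb
      · simp only [Set.mem_preimage, Set.mem_Ici]
        have := hiff.mp (of_decide_eq_true hb)
        linarith
      · simp only [Set.mem_preimage, Set.mem_Iic]
        have hnot : ¬ 0 < g j (x + t • v) := by
          intro hcc
          exact hb (decide_eq_true hcc)
        have := fun h => hnot (hiff.mpr h)
        exact le_of_not_gt this
  -- enumerate the realizable patterns
  have hNcard : Nat.card R = N := Nat.card_coe_set_eq R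
  let eR : ↥R ≃ Fin N := (Finite.equivFin ↥R).trans (finCongr hNcard)
  refine ⟨N, hNbound, fun j => Cell (eR.symm j).1, fun j => hconv _, ?_, ?_⟩
  · ext x
    simp only [Set.mem_iUnion, Set.mem_univ, iff_true]
    obtain ⟨ε, hεR, hx⟩ := hcover x
    refine ⟨eR ⟨ε, hεR⟩, ?_⟩
    rw [Equiv.symm_apply_apply]
    exact hx
  · intro j
    set ε := (eR.symm j).1 with hεdef
    refine ⟨(∑ i : Fin m, if h : w i = 0 then AffineMap.const ℝ (EuclideanSpace ℝ (Fin d)) (a i * max 0 (b i))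
        else (if ε (e.symm ⟨i, h⟩) = true then a i • gA i else 0))
        + AffineMap.const ℝ (EuclideanSpace ℝ (Fin d)) c, ?_⟩
    intro x hx
    rw [hf x]
    rw [AffineMap.coe_add, Pi.add_apply, SHLaux.affine_sum_apply]
    have hconst : (AffineMap.const ℝ (EuclideanSpace ℝ (Fin d)) c) x = c := rfl
    rw [hconst]
    congr 1
    refine Finset.sum_congr rfl fun i _ => ?_
    by_cases h : w i = 0
    · rw [dif_pos h]
      have : ⟪w i, x⟫ = 0 := by rw [h]; exact inner_zero_left x
      rw [this, zero_add]
      rfl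
    · rw [dif_neg h]
      have heq : g (e.symm ⟨i, h⟩) = gA i := by
        show gA (e (e.symm ⟨i, h⟩)).1 = gA i
        rw [Equiv.apply_symm_apply]
      have hmem := Set.mem_iInter.mp hx (e.symm ⟨i, h⟩)
      by_cases hb : ε (e.symm ⟨i, h⟩) = true
      · rw [if_pos hb]
        rw [if_pos hb, heq] at hmem
        have h0 : (0:ℝ) ≤ ⟪w i, x⟫ + b i := hmem
        rw [max_eq_right h0]
        rw [AffineMap.coe_smul, Pi.smul_apply, smul_eq_mul, hgA]
      · rw [if_neg hb]
        rw [if_neg hb, heq] at hmem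
        have h0 : ⟪w i, x⟫ + b i ≤ 0 := hmem
        rw [max_eq_left h0]
        simp
end

section
/- For all natural numbers m, d with 2 ≤ d and d ≤ m, (d − 1)! · (∑ k in Finset.range (d+1), Nat.choose m k) ≤ m ^ d. -/
theorem factorial_mul_sum_choose_le_pow (m d : ℕ) (hd : 2 ≤ d) (hdm : d ≤ m) :
    Nat.factorial (d - 1) * (∑ k ∈ Finset.range (d + 1), Nat.choose m k) ≤ m ^ d := by
  induction d, hd using Nat.le_induction with
  | base =>
    simp only [Finset.sum_range_succ, Finset.sum_range_zero]
    obtain ⟨j, rfl⟩ : ∃ j, m = j + 2 := ⟨m - 2, by omega⟩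
    have h2 : 2 * Nat.choose (j + 2) 2 = (j + 2) * (j + 1) := by
      rw [Nat.choose_two_right]
      obtain ⟨c, hc⟩ : Even ((j + 1) * (j + 2)) := by
        simpa using Nat.even_mul_succ_self (j + 1)
      have hc' : (j + 2) * (j + 1) = c + c := by rw [Nat.mul_comm]; exact hc
      rw [show j + 2 - 1 = j + 1 from rfl, hc']
      omega
    simp only [Nat.choose_one_right, Nat.choose_zero_right]
    have h1 : Nat.factorial (2 - 1) = 1 := rfl
    rw [h1]
    nlinarith [sq_nonneg j]
  | succ n hn ih =>
    have hnm : n ≤ m := by omega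
    have IH := ih hnm
    rw [Finset.sum_range_succ]
    have key : (n + 1) * (Nat.factorial (n + 1 - 1) *
        ((∑ k ∈ Finset.range (n + 1), Nat.choose m k) + Nat.choose m (n + 1)))
        ≤ (n + 1) * m ^ (n + 1) := by
      have hfac : Nat.factorial n = n * Nat.factorial (n - 1) := by
        cases n with
        | zero => omega
        | succ k => simp [Nat.factorial]
      have h1 : (n + 1) * (Nat.factorial n * (∑ k ∈ Finset.range (n + 1), Nat.choose m k))
          ≤ n * m ^ (n + 1) := by
        calc (n + 1) * (Nat.factorial n * (∑ k ∈ Finset.range (n + 1), Nat.choose m k))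
            = (n + 1) * n * (Nat.factorial (n - 1) * (∑ k ∈ Finset.range (n + 1), Nat.choose m k)) := by
              rw [hfac]; ring
          _ ≤ (n + 1) * n * m ^ n := by
              exact Nat.mul_le_mul_left _ IH
          _ ≤ m * n * m ^ n := by
              exact Nat.mul_le_mul_right _ (Nat.mul_le_mul_right _ (by omega))
          _ = n * m ^ (n + 1) := by ring
      have h2 : (n + 1) * (Nat.factorial n * Nat.choose m (n + 1)) ≤ m ^ (n + 1) := by
        have : (n + 1) * (Nat.factorial n * Nat.choose m (n + 1))
            = Nat.descFactorial m (n + 1) := by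
          rw [Nat.descFactorial_eq_factorial_mul_choose, Nat.factorial_succ]; ring
        rw [this]
        exact Nat.descFactorial_le_pow m (n + 1)
      calc (n + 1) * (Nat.factorial (n + 1 - 1) *
          ((∑ k ∈ Finset.range (n + 1), Nat.choose m k) + Nat.choose m (n + 1)))
          = (n + 1) * (Nat.factorial n * (∑ k ∈ Finset.range (n + 1), Nat.choose m k))
            + (n + 1) * (Nat.factorial n * Nat.choose m (n + 1)) := by
            simp [Nat.add_sub_cancel]; ring
        _ ≤ n * m ^ (n + 1) + m ^ (n + 1) := Nat.add_le_add h1 h2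
        _ = (n + 1) * m ^ (n + 1) := by ring
    exact Nat.le_of_mul_le_mul_left key (by omega)
end

section
/- Define F : ℕ → ℝ × ℝ → ℝ × ℝ by F 1 (x, y) = (|x|, |y|) and, for k ≥ 1, F (k+1) (x, y) = (Real.cos (π/2^(k+1)) · (F k (x,y)).1 + Real.sin (π/2^(k+1)) · (F k (x,y)).2, |Real.cos (π/2^(k+1)) · (F k (x,y)).2 − Real.sin (π/2^(k+1)) · (F k (x,y)).1|). Then for every k ≥ 1 and every (x, y) ∈ ℝ × ℝ, Real.cos (π/2^k) · Real.sqrt (x^2 + y^2) ≤ (F k (x,y)).1 ∧ (F k (x,y)).1 ≤ Real.sqrt (x^2 + y^2). -/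
open Real

lemma sin_abs_eq (t : ℝ) (ht : |t| ≤ π) : Real.sin |t| = |Real.sin t| := by
  rcases le_or_gt 0 t with h | h
  · rw [abs_of_nonneg h] at *
    rw [abs_of_nonneg (Real.sin_nonneg_of_nonneg_of_le_pi h ht)]
  · rw [abs_of_neg h] at *
    rw [Real.sin_neg]
    have hs : Real.sin t ≤ 0 := by
      have := Real.sin_nonneg_of_nonneg_of_le_pi (by linarith : (0:ℝ) ≤ -t) ht
      rw [Real.sin_neg] at this; linarith
    rw [abs_of_nonpos hs]

theorem deep_rectifier_norm_approx_2d (F : ℕ → ℝ × ℝ → ℝ × ℝ)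
    (hF1 : ∀ x y : ℝ, F 1 (x, y) = (|x|, |y|))
    (hFrec : ∀ k : ℕ, 1 ≤ k → ∀ x y : ℝ, F (k + 1) (x, y) =
      (Real.cos (π / 2 ^ (k + 1)) * (F k (x, y)).1 +
        Real.sin (π / 2 ^ (k + 1)) * (F k (x, y)).2,
       |Real.cos (π / 2 ^ (k + 1)) * (F k (x, y)).2 -
        Real.sin (π / 2 ^ (k + 1)) * (F k (x, y)).1|)) :
    ∀ k : ℕ, 1 ≤ k → ∀ x y : ℝ,
      Real.cos (π / 2 ^ k) * Real.sqrt (x ^ 2 + y ^ 2) ≤ (F k (x, y)).1 ∧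
      (F k (x, y)).1 ≤ Real.sqrt (x ^ 2 + y ^ 2) := by
  intro k hk x y
  set r := Real.sqrt (x ^ 2 + y ^ 2) with hrdef
  have hr0 : 0 ≤ r := Real.sqrt_nonneg _
  have hr2 : r ^ 2 = x ^ 2 + y ^ 2 := Real.sq_sqrt (by positivity)
  have key : ∀ m : ℕ, 1 ≤ m → ∃ α : ℝ, 0 ≤ α ∧ α ≤ π / 2 ^ m ∧
      F m (x, y) = (r * Real.cos α, r * Real.sin α) := by
    intro m hm
    induction m with
    | zero => omega
    | succ n ih =>
      rcases Nat.lt_or_ge n 1 with h1 | h1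
      · -- base case n = 0
        interval_cases n
        rcases eq_or_lt_of_le hr0 with hr | hr
        · have hx : x = 0 := by nlinarith [sq_nonneg x, sq_nonneg y]
          have hy : y = 0 := by nlinarith [sq_nonneg x, sq_nonneg y]
          refine ⟨0, le_refl _, by positivity, ?_⟩
          rw [hF1, hx, hy, Real.cos_zero, Real.sin_zero, ← hr]
          norm_num
        · have hxr : |x| ≤ r := by
            rw [hrdef, ← Real.sqrt_sq_eq_abs]
            exact Real.sqrt_le_sqrt (by nlinarith)
          have hd0 : 0 ≤ |x| / r := div_nonneg (abs_nonneg x) hr0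
          have hd1 : |x| / r ≤ 1 := (div_le_one hr).mpr hxr
          refine ⟨Real.arccos (|x| / r), Real.arccos_nonneg _, ?_, ?_⟩
          · have := (Real.arccos_le_pi_div_two (x := |x| / r)).mpr hd0
            calc Real.arccos (|x| / r) ≤ π / 2 := this
              _ = π / 2 ^ 1 := by norm_num
          · rw [hF1, Real.cos_arccos (by linarith) hd1, Real.sin_arccos]
            have h2 : 1 - (|x| / r) ^ 2 = (|y| / r) ^ 2 := by
              rw [div_pow, div_pow, sq_abs, sq_abs]
              field_simp
              nlinarith
            rw [h2, Real.sqrt_sq (div_nonneg (abs_nonneg y) hr0)]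
            field_simp
      · -- inductive step
        obtain ⟨α, hα0, hα1, hFn⟩ := ih h1
        set θ := π / 2 ^ (n + 1) with hθdef
        have hθpos : 0 < θ := by positivity
        have hθhalf : π / 2 ^ n = 2 * θ := by
          rw [hθdef, pow_succ]; ring
        have hθpi2 : θ ≤ π / 2 := by
          rw [hθdef]
          have h2 : (2:ℝ) ≤ 2 ^ (n + 1) := by
            calc (2:ℝ) = 2 ^ 1 := by norm_num
              _ ≤ 2 ^ (n + 1) := by
                apply pow_le_pow_right₀ (by norm_num); omega
          rw [div_le_div_iff₀ (by positivity) (by norm_num)]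
          nlinarith [Real.pi_pos]
        have hαθ : |α - θ| ≤ θ := by
          rw [abs_le]
          constructor <;> [linarith; linarith [hα1, hθhalf ▸ hα1]]
        refine ⟨|α - θ|, abs_nonneg _, hαθ, ?_⟩
        rw [hFrec n h1 x y, hFn]
        simp only [← hθdef]
        have hc : r * Real.cos |α - θ| =
            Real.cos θ * (r * Real.cos α) + Real.sin θ * (r * Real.sin α) := by
          rw [Real.cos_abs, Real.cos_sub]; ring
        have hs : r * Real.sin |α - θ| =
            |Real.cos θ * (r * Real.sin α) - Real.sin θ * (r * Real.cos α)| := by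
          rw [sin_abs_eq _ (le_trans hαθ (by linarith [Real.pi_pos]))]
          have : Real.cos θ * (r * Real.sin α) - Real.sin θ * (r * Real.cos α)
              = r * Real.sin (α - θ) := by rw [Real.sin_sub]; ring
          rw [this, abs_mul, abs_of_nonneg hr0]
        rw [← hc, ← hs]
  obtain ⟨α, hα0, hα1, hFk⟩ := key k hk
  rw [hFk]
  dsimp only
  have hkpi : π / 2 ^ k ≤ π := by
    apply div_le_self Real.pi_pos.le
    exact one_le_pow₀ (by norm_num)
  constructor
  · have hcc : Real.cos (π / 2 ^ k) ≤ Real.cos α :=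
      Real.cos_le_cos_of_nonneg_of_le_pi hα0 hkpi hα1
    nlinarith [hr0]
  · nlinarith [Real.cos_le_one α, hr0]
end

section
/- Define F : ℕ → ℝ × ℝ → ℝ × ℝ by F 1 (x, y) = (|x|, |y|) and, for k ≥ 1, F (k+1) (x, y) = (Real.cos (π/2^(k+1)) · (F k (x,y)).1 + Real.sin (π/2^(k+1)) · (F k (x,y)).2, |Real.cos (π/2^(k+1)) · (F k (x,y)).2 − Real.sin (π/2^(k+1)) · (F k (x,y)).1|). Then for every k ≥ 1 and every (x, y) ∈ ℝ × ℝ, setting r = Real.sqrt (x^2 + y^2), there exists t ∈ Set.Icc 0 (π/2^k) such that (F k (x,y)).1 = r · Real.cos t and (F k (x,y)).2 = r · Real.sin t. -/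
open Real

theorem deep_rectifier_polar_form_2d (F : ℕ → ℝ × ℝ → ℝ × ℝ)
    (hF1 : ∀ x y : ℝ, F 1 (x, y) = (|x|, |y|))
    (hFrec : ∀ k : ℕ, 1 ≤ k → ∀ x y : ℝ, F (k + 1) (x, y) =
      (Real.cos (π / 2 ^ (k + 1)) * (F k (x, y)).1 +
        Real.sin (π / 2 ^ (k + 1)) * (F k (x, y)).2,
       |Real.cos (π / 2 ^ (k + 1)) * (F k (x, y)).2 -
        Real.sin (π / 2 ^ (k + 1)) * (F k (x, y)).1|)) :
    ∀ k : ℕ, 1 ≤ k → ∀ x y : ℝ,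
      ∃ t ∈ Set.Icc (0 : ℝ) (π / 2 ^ k),
        (F k (x, y)).1 = Real.sqrt (x ^ 2 + y ^ 2) * Real.cos t ∧
        (F k (x, y)).2 = Real.sqrt (x ^ 2 + y ^ 2) * Real.sin t := by
  intro k hk
  induction k with
  | zero => omega
  | succ n ih =>
    rcases Nat.lt_or_ge n 1 with h1 | h1
    · -- base case n = 0
      interval_cases n
      intro x y
      set r := Real.sqrt (x ^ 2 + y ^ 2) with hr
      have hr0 : 0 ≤ r := Real.sqrt_nonneg _
      have hyr : |y| ≤ r := by
        rw [hr, ← Real.sqrt_sq_eq_abs]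
        exact Real.sqrt_le_sqrt (by nlinarith)
      rcases eq_or_lt_of_le hr0 with hre | hrpos
      · -- r = 0, so x = y = 0
        have hxy : x ^ 2 + y ^ 2 = 0 := by
          have := Real.sqrt_eq_zero' (x := x ^ 2 + y ^ 2)
          rw [← hr, ← hre] at this
          have h2 := this.mp rfl
          nlinarith [sq_nonneg x, sq_nonneg y]
        have hx : x = 0 := by nlinarith [sq_nonneg x, sq_nonneg y]
        have hy : y = 0 := by nlinarith [sq_nonneg x, sq_nonneg y]
        refine ⟨0, ⟨le_refl _, by positivity⟩, ?_, ?_⟩ <;>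
          simp [hF1, hx, hy, ← hre]
      · set t := Real.arcsin (|y| / r) with ht
        have hu1 : |y| / r ≤ 1 := by
          rw [div_le_one hrpos]; exact hyr
        have hu0 : 0 ≤ |y| / r := by positivity
        refine ⟨t, ⟨Real.arcsin_nonneg.mpr hu0, ?_⟩, ?_, ?_⟩
        · have := Real.arcsin_le_pi_div_two (|y| / r)
          rw [ht]; norm_num; linarith
        · have hcos : Real.cos t = Real.sqrt (1 - (|y| / r) ^ 2) := by
            rw [ht, Real.cos_arcsin]
          have hr2 : r ^ 2 = x ^ 2 + y ^ 2 := Real.sq_sqrt (by positivity)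
          rw [hF1]
          simp only
          rw [hcos, show r * Real.sqrt (1 - (|y| / r) ^ 2)
              = Real.sqrt (r ^ 2 * (1 - (|y| / r) ^ 2)) from by
            rw [Real.sqrt_mul (by positivity), Real.sqrt_sq hr0]]
          rw [show r ^ 2 * (1 - (|y| / r) ^ 2) = x ^ 2 by
            field_simp
            linarith [sq_abs y]]
          exact (Real.sqrt_sq_eq_abs x).symm
        · rw [hF1]
          simp only
          rw [ht, Real.sin_arcsin (by linarith) hu1]
          field_simp
    · -- inductive step
      intro x y
      obtain ⟨t, ⟨ht0, ht1⟩, hc, hs⟩ := ih h1 x y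
      set θ := π / 2 ^ (n + 1) with hθ
      have hθpos : 0 < θ := by positivity
      have hθhalf : θ ≤ π / 2 := by
        rw [hθ]
        apply div_le_div_of_nonneg_left Real.pi_pos.le (by norm_num)
        have : (2 : ℝ) ^ 1 ≤ 2 ^ (n + 1) := by
          apply pow_le_pow_right₀ (by norm_num); omega
        simpa using this
      have h2θ : π / 2 ^ n = 2 * θ := by
        rw [hθ, pow_succ]; field_simp
      set r := Real.sqrt (x ^ 2 + y ^ 2) with hr
      have hr0 : 0 ≤ r := Real.sqrt_nonneg _
      refine ⟨|t - θ|, ⟨abs_nonneg _, ?_⟩, ?_, ?_⟩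
      · rw [abs_le]
        constructor <;> [linarith; (rw [h2θ] at ht1; linarith)]
      · rw [hFrec n h1, hc, hs]
        simp only
        rw [Real.cos_abs, Real.cos_sub]
        ring
      · rw [hFrec n h1, hc, hs]
        simp only
        have hsin : Real.sin |t - θ| = |Real.sin (t - θ)| := by
          rcases abs_cases (t - θ) with ⟨he, _⟩ | ⟨he, hneg⟩
          · rw [he, abs_of_nonneg]
            apply Real.sin_nonneg_of_nonneg_of_le_pi (by linarith)
            rw [h2θ] at ht1
            nlinarith [Real.pi_pos]
          · have hle : Real.sin (t - θ) ≤ 0 :=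
              Real.sin_nonpos_of_nonpos_of_neg_pi_le (by linarith)
                (by nlinarith [Real.pi_pos])
            rw [he, Real.sin_neg, abs_of_nonpos hle]
        have hkey : Real.cos θ * (r * Real.sin t) - Real.sin θ * (r * Real.cos t)
            = r * Real.sin (t - θ) := by rw [Real.sin_sub]; ring
        rw [hkey, abs_mul, abs_of_nonneg hr0, hsin]
end

section
/- Let d, m ≥ 1 with d ≤ m and d ≥ 2, and let f : EuclideanSpace ℝ (Fin d) → ℝ be a single-hidden-layer rectifier network, f x = (∑ i, a i · max 0 (⟪w i, x⟫ + b i)) + c, with parameters a, b : Fin m → ℝ, w : Fin m → EuclideanSpace ℝ (Fin d), c : ℝ. Then there exist N with (d − 1)! · N ≤ m ^ d and sets S : Fin N → Set (EuclideanSpace ℝ (Fin d)) such that each S j is convex, ⋃ j, S j = Set.univ, and for each j there exists a continuous affine map g j : EuclideanSpace ℝ (Fin d) →ᵃ[ℝ] ℝ with f x = g j x for all x ∈ S j. -/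
open scoped RealInnerProductSpace

open Module

lemma sum_choose_succ0 (m K : ℕ) :
    ∑ k ∈ Finset.range (K+1), (m+1).choose k
      = ∑ k ∈ Finset.range (K+1), m.choose k + ∑ k ∈ Finset.range K, m.choose k := by
  induction K with
  | zero => simp
  | succ K ih =>
    rw [Finset.sum_range_succ (n := K+1), ih, Finset.sum_range_succ (n := K+1),
      Finset.sum_range_succ (n := K), Nat.choose_succ_succ]
    ring

lemma seg_pos {p q t : ℝ} (ht0 : 0 < t) (ht1 : t < 1) (hp : 0 < p) (hq : 0 < q) :
    0 < t * (q - p) + p := by nlinarith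

lemma seg_neg {p q t : ℝ} (ht0 : 0 < t) (ht1 : t < 1) (hp : p < 0) (hq : q < 0) :
    t * (q - p) + p < 0 := by nlinarith

set_option maxHeartbeats 1000000 in
theorem pattern_count : ∀ (m : ℕ) (V : Type) [AddCommGroup V] [Module ℝ V]
    [FiniteDimensional ℝ V] (g : Fin m → (V →ᵃ[ℝ] ℝ)),
    {s : Fin m → Bool | ∃ x : V, ∀ i, if s i then 0 < g i x else g i x < 0}.ncard
      ≤ ∑ k ∈ Finset.range (Module.finrank ℝ V + 1), m.choose k := by
  intro m
  induction m with
  | zero =>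
    intro V _ _ _ g
    have hsub : {s : Fin 0 → Bool | ∃ x : V, ∀ i, if s i then 0 < g i x else g i x < 0}
        ⊆ {fun i => i.elim0} := by
      intro s _; simp only [Set.mem_singleton_iff]; funext i; exact i.elim0
    calc _ ≤ ({fun i => i.elim0} : Set (Fin 0 → Bool)).ncard :=
          Set.ncard_le_ncard hsub (Set.toFinite _)
      _ = 1 := Set.ncard_singleton _
      _ ≤ _ := by
          have : (0:ℕ).choose 0 ≤ ∑ k ∈ Finset.range (Module.finrank ℝ V + 1), (0:ℕ).choose k :=
            Finset.single_le_sum (fun k _ => Nat.zero_le _) (Finset.mem_range.2 (Nat.succ_pos _))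
          simpa using this
  | succ m ih =>
    intro V _ _ _ g
    classical
    set gl := g (Fin.last m) with hgl
    set g' : Fin m → (V →ᵃ[ℝ] ℝ) := fun i => g i.castSucc with hg'
    set P := {s : Fin (m+1) → Bool | ∃ x : V, ∀ i, if s i then 0 < g i x else g i x < 0} with hP
    set Pm := {s : Fin m → Bool | ∃ x : V, ∀ i, if s i then 0 < g' i x else g' i x < 0} with hPm
    have hres : ∀ s ∈ P, Fin.init s ∈ Pm := by
      rintro s ⟨x, hx⟩
      exact ⟨x, fun i => hx i.castSucc⟩
    by_cases hl : gl.linear = 0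
    · -- last functional constant
      have hconst : ∀ x y : V, gl x = gl y := by
        intro x y
        have h := gl.map_vadd y (x - y)
        simpa [hl, vadd_eq_add, sub_add_cancel] using h
      have hinj : Set.InjOn Fin.init P := by
        rintro s1 hs1 s2 hs2 h12
        obtain ⟨x1, hx1⟩ := hs1
        obtain ⟨x2, hx2⟩ := hs2
        have h1 := hx1 (Fin.last m)
        have h2 := hx2 (Fin.last m)
        have hc := hconst x1 x2
        have hlast : s1 (Fin.last m) = s2 (Fin.last m) := by
          cases hb1 : s1 (Fin.last m) <;> cases hb2 : s2 (Fin.last m) <;>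
            rw [hb1] at h1 <;> rw [hb2] at h2 <;> simp at h1 h2 <;> first | rfl | linarith
        funext i
        refine Fin.lastCases hlast (fun j => ?_) i
        exact congrFun h12 j
      calc P.ncard ≤ Pm.ncard :=
            Set.ncard_le_ncard_of_injOn Fin.init hres hinj (Set.toFinite _)
        _ ≤ ∑ k ∈ Finset.range (Module.finrank ℝ V + 1), m.choose k := by
            have := ih V g'; rwa [← hPm] at this
        _ ≤ ∑ k ∈ Finset.range (Module.finrank ℝ V + 1), (m+1).choose k :=
            Finset.sum_le_sum fun k _ => Nat.choose_le_choose k (Nat.le_succ m)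
    · -- last functional nonconstant
      obtain ⟨v, hv⟩ : ∃ v, gl.linear v ≠ 0 := by
        by_contra hcon; push_neg at hcon; exact hl (LinearMap.ext hcon)
      have hgl0 : ∀ y : V, gl y = gl.linear y + gl 0 := by
        intro y
        have h := gl.map_vadd (0 : V) y
        simpa [vadd_eq_add] using h
      set xb : V := (-(gl 0) / gl.linear v) • v with hxb
      have hxb0 : gl xb = 0 := by
        rw [hgl0, hxb, map_smul, smul_eq_mul]
        field_simp
        ring
      set W := LinearMap.ker gl.linear with hWdef
      set ι : W →ᵃ[ℝ] V :=
        { toFun := fun u => xb + (u : V)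
          linear := W.subtype
          map_vadd' := by
            intro p u
            simp only [vadd_eq_add, Submodule.coe_add, Submodule.coe_subtype]
            abel } with hι
      set h : Fin m → (W →ᵃ[ℝ] ℝ) := fun i => (g' i).comp ι with hh
      set Q := {s : Fin m → Bool | ∃ u : W, ∀ i, if s i then 0 < h i u else h i u < 0} with hQ
      have hW : Module.finrank ℝ W + 1 = Module.finrank ℝ V := by
        have h1 : Module.finrank ℝ (LinearMap.range gl.linear) + Module.finrank ℝ W
            = Module.finrank ℝ V := LinearMap.finrank_range_add_finrank_ker gl.linear
        have hne : LinearMap.range gl.linear ≠ ⊥ := by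
          intro hb; exact hl (LinearMap.range_eq_bot.mp hb)
        have h0 : Module.finrank ℝ (LinearMap.range gl.linear) ≠ 0 := by
          intro hz; exact hne (Submodule.finrank_eq_zero.mp hz)
        have hle : Module.finrank ℝ (LinearMap.range gl.linear) ≤ 1 := by
          simpa using Submodule.finrank_le (LinearMap.range gl.linear)
        omega
      have key : ∀ s' : Fin m → Bool,
          Fin.snoc s' true ∈ P → Fin.snoc s' false ∈ P → s' ∈ Q := by
        rintro s' ⟨xp, hxp⟩ ⟨xm, hxm⟩
        have hp : 0 < gl xp := by
          have := hxp (Fin.last m); simpa [Fin.snoc_last] using this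
        have hm' : gl xm < 0 := by
          have := hxm (Fin.last m); simpa [Fin.snoc_last] using this
        have hden : 0 < gl xp - gl xm := by linarith
        set t : ℝ := gl xp / (gl xp - gl xm) with ht
        have ht0 : 0 < t := div_pos hp hden
        have ht1 : t < 1 := by rw [ht, div_lt_one hden]; linarith
        set x0 : V := AffineMap.lineMap xp xm t with hx0
        have hline : ∀ G : V →ᵃ[ℝ] ℝ, G x0 = t * (G xm - G xp) + G xp := by
          intro G
          rw [hx0, AffineMap.apply_lineMap]
          simp [AffineMap.lineMap_apply, smul_eq_mul]
        have hgl_x0 : gl x0 = 0 := by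
          rw [hline gl, ht]
          field_simp
          ring
        have hker : (x0 - xb) ∈ W := by
          rw [hWdef, LinearMap.mem_ker, map_sub]
          have e1 := hgl0 x0
          have e2 := hgl0 xb
          rw [hgl_x0] at e1
          rw [hxb0] at e2
          linarith
        refine ⟨⟨x0 - xb, hker⟩, fun i => ?_⟩
        have hι' : ι ⟨x0 - xb, hker⟩ = x0 := by
          show xb + (x0 - xb) = x0
          abel
        have hgi : h i ⟨x0 - xb, hker⟩ = g' i x0 := by
          show (g' i) (ι ⟨x0 - xb, hker⟩) = g' i x0
          rw [hι']
        have hp' := hxp i.castSucc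
        have hm'' := hxm i.castSucc
        rw [Fin.snoc_castSucc] at hp' hm''
        have hx0i : g' i x0 = t * (g' i xm - g' i xp) + g' i xp := hline (g' i)
        rw [hgi, hx0i]
        cases hsi : s' i
        · rw [hsi] at hp' hm''
          simp only [Bool.false_eq_true, if_false] at hp' hm'' ⊢
          exact seg_neg ht0 ht1 hp' hm''
        · rw [hsi] at hp' hm''
          simp only [if_true] at hp' hm'' ⊢
          exact seg_pos ht0 ht1 hp' hm''
      -- injection P ↪ Pm ⊕ Q
      have hcard : P.ncard ≤ Pm.ncard + Q.ncard := by
        have snocP : ∀ (s : Fin (m+1) → Bool), s ∈ P → s (Fin.last m) = true →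
            Fin.snoc (Fin.init s) true ∈ P := by
          intro s hs hst
          have hx : Fin.snoc (Fin.init s) (s (Fin.last m)) ∈ P := by
            rw [Fin.snoc_init_self]; exact hs
          rwa [hst] at hx
        have snocPf : ∀ (s : Fin (m+1) → Bool), s ∈ P → s (Fin.last m) = false →
            Fin.snoc (Fin.init s) false ∈ P := by
          intro s hs hst
          have hx : Fin.snoc (Fin.init s) (s (Fin.last m)) ∈ P := by
            rw [Fin.snoc_init_self]; exact hs
          rwa [hst] at hx
        have hFex : ∃ F : ↥P → (↥Pm ⊕ ↥Q), Function.Injective F := by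
          refine ⟨fun s =>
            if hcond : s.1 (Fin.last m) = false ∧ Fin.snoc (Fin.init s.1) true ∈ P then
              Sum.inr ⟨Fin.init s.1, key _ hcond.2 (snocPf s.1 s.2 hcond.1)⟩
            else Sum.inl ⟨Fin.init s.1, hres s.1 s.2⟩, ?_⟩
          rintro ⟨s1, hs1⟩ ⟨s2, hs2⟩ heq
          simp only at heq
          have main : s1 = s2 := by
            by_cases h1 : s1 (Fin.last m) = false ∧ Fin.snoc (Fin.init s1) true ∈ P <;>
              by_cases h2 : s2 (Fin.last m) = false ∧ Fin.snoc (Fin.init s2) true ∈ P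
            · rw [dif_pos h1, dif_pos h2] at heq
              have hinit : Fin.init s1 = Fin.init s2 :=
                congrArg Subtype.val (Sum.inr.inj heq)
              rw [← Fin.snoc_init_self s1, ← Fin.snoc_init_self s2, hinit, h1.1, h2.1]
            · rw [dif_pos h1, dif_neg h2] at heq
              exact absurd heq (by simp)
            · rw [dif_neg h1, dif_pos h2] at heq
              exact absurd heq (by simp)
            · rw [dif_neg h1, dif_neg h2] at heq
              have hinit : Fin.init s1 = Fin.init s2 :=
                congrArg Subtype.val (Sum.inl.inj heq)
              have hlast : s1 (Fin.last m) = s2 (Fin.last m) := by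
                cases hb1 : s1 (Fin.last m) <;> cases hb2 : s2 (Fin.last m)
                · rfl
                · exact absurd ⟨hb1, hinit ▸ snocP s2 hs2 hb2⟩ h1
                · exact absurd ⟨hb2, hinit ▸ snocP s1 hs1 hb1⟩ h2
                · rfl
              rw [← Fin.snoc_init_self s1, ← Fin.snoc_init_self s2, hinit, hlast]
          exact Subtype.ext main
        obtain ⟨F, hF⟩ := hFex
        calc P.ncard = Nat.card ↥P := (Nat.card_coe_set_eq P).symm
          _ ≤ Nat.card (↥Pm ⊕ ↥Q) := Nat.card_le_card_of_injective F hF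
          _ = Nat.card ↥Pm + Nat.card ↥Q := Nat.card_sum
          _ = Pm.ncard + Q.ncard := by rw [Nat.card_coe_set_eq, Nat.card_coe_set_eq]
      have h1 := ih V g'
      rw [← hPm] at h1
      have h2 := ih W h
      rw [← hQ, hW] at h2
      have hrw := sum_choose_succ0 m (Module.finrank ℝ V)
      have hQn : Q.ncard ≤ ∑ k ∈ Finset.range (Module.finrank ℝ V), m.choose k := by
        rw [← hW, Finset.sum_range_succ] at h2 ⊢
        omega
      omega

lemma sum_choose_succ1 (m K : ℕ) :
    ∑ k ∈ Finset.range (K+1), (m+1).choose k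
      = ∑ k ∈ Finset.range (K+1), m.choose k + ∑ k ∈ Finset.range K, m.choose k := by
  induction K with
  | zero => simp
  | succ K ih =>
    rw [Finset.sum_range_succ (n := K+1), ih, Finset.sum_range_succ (n := K+1),
      Finset.sum_range_succ (n := K), Nat.choose_succ_succ]
    ring

lemma pow_add_le (x k : ℕ) : x^(k+1) + (k+1) * x^k ≤ (x+1)^(k+1) := by
  induction k with
  | zero => simp
  | succ k ih =>
    calc x^(k+2) + (k+2) * x^(k+1)
        ≤ x^(k+2) + (k+2) * x^(k+1) + (k+1) * x^k := Nat.le_add_right _ _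
      _ = (x^(k+1) + (k+1) * x^k) * (x+1) := by ring
      _ ≤ (x+1)^(k+1) * (x+1) := Nat.mul_le_mul_right _ ih
      _ = (x+1)^(k+2) := by ring

lemma fact_two_pow (e : ℕ) : Nat.factorial (e+1) * 2^(e+2) ≤ (e+2)^(e+2) := by
  induction e with
  | zero => decide
  | succ e ih =>
    have hpow : 2 * (e+2)^(e+2) ≤ (e+3)^(e+2) := by
      have := pow_add_le (e+2) (e+1)
      calc 2 * (e+2)^(e+2) = (e+2)^(e+2) + (e+2) * (e+2)^(e+1) := by ring
        _ ≤ (e+3)^(e+2) := this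
    calc Nat.factorial (e+2) * 2^(e+3)
        = 2 * (e+2) * (Nat.factorial (e+1) * 2^(e+2)) := by
          rw [Nat.factorial_succ]; ring
      _ ≤ 2 * (e+2) * (e+2)^(e+2) := Nat.mul_le_mul_left _ ih
      _ = (e+2) * (2 * (e+2)^(e+2)) := by ring
      _ ≤ (e+2) * (e+3)^(e+2) := Nat.mul_le_mul_left _ hpow
      _ ≤ (e+3) * (e+3)^(e+2) := Nat.mul_le_mul_right _ (by omega)
      _ = (e+3)^(e+3) := by ring

lemma main_arith : ∀ m e : ℕ, e + 2 ≤ m →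
    Nat.factorial (e+1) * ∑ k ∈ Finset.range (e+3), m.choose k ≤ m^(e+2) := by
  intro m
  induction m with
  | zero => intro e he; omega
  | succ m ih =>
    intro e he
    rcases Nat.lt_or_ge m (e+2) with hlt | hge
    · -- m + 1 = e + 2
      have hme : m = e + 1 := by omega
      subst hme
      have hsum : ∑ k ∈ Finset.range (e+3), (e+2).choose k = 2^(e+2) :=
        Nat.sum_range_choose (e+2)
      rw [hsum]
      exact fact_two_pow e
    · -- e + 2 ≤ m
      rw [sum_choose_succ1 m (e+2), Nat.mul_add]
      have hA := ih e hge
      have hB : Nat.factorial (e+1) * ∑ k ∈ Finset.range (e+2), m.choose k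
          ≤ (e+2) * m^(e+1) := by
        cases e with
        | zero =>
          have : ∑ k ∈ Finset.range 2, m.choose k = 1 + m := by
            simp [Finset.sum_range_succ]
          rw [this]
          simpa [Nat.factorial] using by omega
        | succ e' =>
          have hle : e' + 2 ≤ m := by omega
          have := ih e' hle
          calc Nat.factorial (e'+2) * ∑ k ∈ Finset.range (e'+3), m.choose k
              = (e'+2) * (Nat.factorial (e'+1) * ∑ k ∈ Finset.range (e'+3), m.choose k) := by
                rw [Nat.factorial_succ]; ring
            _ ≤ (e'+2) * m^(e'+2) := Nat.mul_le_mul_left _ this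
            _ ≤ (e'+3) * m^(e'+2) := Nat.mul_le_mul_right _ (by omega)
      have hpow := pow_add_le m (e+1)
      calc Nat.factorial (e+1) * ∑ k ∈ Finset.range (e+3), m.choose k
            + Nat.factorial (e+1) * ∑ k ∈ Finset.range (e+2), m.choose k
          ≤ m^(e+2) + (e+2) * m^(e+1) := Nat.add_le_add hA hB
        _ ≤ (m+1)^(e+2) := hpow

lemma solset_subsingleton {a0 c : ℝ} (h : a0 ≠ 0 ∨ c ≠ 0) :
    {t : ℝ | a0 + t * c = 0}.Subsingleton := by
  intro t1 h1 t2 h2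
  simp only [Set.mem_setOf_eq] at h1 h2
  rcases eq_or_ne c 0 with hc | hc
  · exfalso
    rcases h with h | h
    · apply h; simpa [hc] using h1
    · exact h hc
  · have : t1 * c = t2 * c := by linarith
    exact mul_right_cancel₀ hc this

lemma exists_good_dir {E : Type*} [NormedAddCommGroup E] [InnerProductSpace ℝ E]
    {m : ℕ} (w : Fin m → E) :
    ∃ v : E, ∀ i, w i ≠ 0 → ⟪w i, v⟫ ≠ 0 := by
  classical
  suffices h : ∀ s : Finset (Fin m), ∃ v, ∀ i ∈ s, w i ≠ 0 → ⟪w i, v⟫ ≠ 0 by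
    obtain ⟨v, hv⟩ := h Finset.univ
    exact ⟨v, fun i => hv i (Finset.mem_univ i)⟩
  intro s
  induction s using Finset.induction_on with
  | empty => exact ⟨0, by simp⟩
  | @insert a s' ha ih =>
    obtain ⟨v, hv⟩ := ih
    by_cases hwa : w a = 0
    · refine ⟨v, fun i hi hwi => ?_⟩
      rcases Finset.mem_insert.mp hi with rfl | hi'
      · exact absurd hwa hwi
      · exact hv i hi' hwi
    · -- bad set of t's
      set B : Set ℝ := {t | ⟪w a, v⟫ + t * ⟪w a, w a⟫ = 0} ∪
        ⋃ i ∈ s', {t | w i ≠ 0 ∧ ⟪w i, v⟫ + t * ⟪w i, w a⟫ = 0} with hB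
      have hBfin : B.Finite := by
        apply Set.Finite.union
        · exact Set.Subsingleton.finite (solset_subsingleton (Or.inr (by
            simpa [real_inner_self_eq_norm_sq] using fun hz : ⟪w a, w a⟫ = 0 =>
              hwa (inner_self_eq_zero.mp hz))))
        · apply Set.Finite.biUnion s'.finite_toSet
          intro i hi
          by_cases hwi : w i = 0
          · have : {t : ℝ | w i ≠ 0 ∧ ⟪w i, v⟫ + t * ⟪w i, w a⟫ = 0} = ∅ := by
              ext t; simp [hwi]
            rw [this]; exact Set.finite_empty
          · have hsub : {t : ℝ | w i ≠ 0 ∧ ⟪w i, v⟫ + t * ⟪w i, w a⟫ = 0}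
                ⊆ {t | ⟪w i, v⟫ + t * ⟪w i, w a⟫ = 0} := fun t ht => ht.2
            exact Set.Finite.subset
              (Set.Subsingleton.finite (solset_subsingleton (Or.inl (hv i hi hwi)))) hsub
      obtain ⟨t, ht⟩ := hBfin.infinite_compl.nonempty
      rw [Set.mem_compl_iff, hB, Set.mem_union] at ht
      push_neg at ht
      obtain ⟨ht1, ht2⟩ := ht
      simp only [Set.mem_iUnion, not_exists, Set.mem_setOf_eq, not_and] at ht2
      refine ⟨v + t • w a, fun i hi hwi => ?_⟩
      rw [inner_add_right, real_inner_smul_right]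
      rcases Finset.mem_insert.mp hi with rfl | hi'
      · exact fun hz => ht1 (by simpa [Set.mem_setOf_eq] using hz)
      · exact fun hz => ht2 i hi' hwi (by linarith [hz])



set_option maxHeartbeats 1000000 in
theorem shl_rectifier_piecewise_affine_factorial_bound (d m : ℕ)
    (hd : 2 ≤ d) (hm : 1 ≤ m) (hdm : d ≤ m)
    (a b : Fin m → ℝ) (w : Fin m → EuclideanSpace ℝ (Fin d)) (c : ℝ)
    (f : EuclideanSpace ℝ (Fin d) → ℝ)
    (hf : ∀ x, f x = (∑ i, a i * max 0 (⟪w i, x⟫ + b i)) + c) :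
    ∃ N : ℕ, Nat.factorial (d - 1) * N ≤ m ^ d ∧
      ∃ S : Fin N → Set (EuclideanSpace ℝ (Fin d)),
        (∀ j, Convex ℝ (S j)) ∧ (⋃ j, S j) = Set.univ ∧
        ∀ j, ∃ g : EuclideanSpace ℝ (Fin d) →ᵃ[ℝ] ℝ, ∀ x ∈ S j, f x = g x := by
  classical
  set G : Fin m → (EuclideanSpace ℝ (Fin d) →ᵃ[ℝ] ℝ) := fun i =>
    if w i = 0 then AffineMap.const ℝ (EuclideanSpace ℝ (Fin d)) 1
    else (innerSL ℝ (w i)).toLinearMap.toAffineMap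
      + AffineMap.const ℝ (EuclideanSpace ℝ (Fin d)) (b i) with hGdef
  have hG0 : ∀ i x, w i = 0 → G i x = 1 := by
    intro i x h; simp [hGdef, h]
  have hGv : ∀ i x, w i ≠ 0 → G i x = ⟪w i, x⟫ + b i := by
    intro i x h; simp [hGdef, h]
  set P := {s : Fin m → Bool | ∃ x, ∀ i, if s i then 0 < G i x else G i x < 0} with hP
  set D : (Fin m → Bool) → Set (EuclideanSpace ℝ (Fin d)) := fun s =>
    {x | ∀ i, if s i then 0 ≤ G i x else G i x ≤ 0} with hD
  -- convexity
  have hconv : ∀ s, Convex ℝ (D s) := by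
    intro s
    rw [hD]
    simp only
    rw [Set.setOf_forall]
    refine convex_iInter fun i => ?_
    cases hsi : s i
    · simp only [hsi, Bool.false_eq_true, if_false]
      exact (convex_Iic (0:ℝ)).affine_preimage (G i)
    · simp only [hsi, if_true]
      exact (convex_Ici (0:ℝ)).affine_preimage (G i)
  -- affine pieces
  have haff : ∀ s : Fin m → Bool, ∃ g : EuclideanSpace ℝ (Fin d) →ᵃ[ℝ] ℝ,
      ∀ x ∈ D s, f x = g x := by
    intro s
    set α : Fin m → ℝ := fun i => if w i ≠ 0 ∧ s i = true then a i else 0 with hα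
    set ρ : Fin m → ℝ := fun i =>
      if w i = 0 then a i * max 0 (b i) else if s i = true then a i * b i else 0 with hρ
    set u := ∑ i, α i • w i with hu
    set r := (∑ i, ρ i) + c with hr
    refine ⟨(innerSL ℝ u).toLinearMap.toAffineMap
      + AffineMap.const ℝ (EuclideanSpace ℝ (Fin d)) r, fun x hx => ?_⟩
    have hterm : ∀ i, a i * max 0 (⟪w i, x⟫ + b i) = α i * ⟪w i, x⟫ + ρ i := by
      intro i
      have hxi : if s i then 0 ≤ G i x else G i x ≤ 0 := hx i
      by_cases hwi : w i = 0
      · simp [hα, hρ, hwi]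
      · have hGi : G i x = ⟪w i, x⟫ + b i := hGv i x hwi
        cases hsi : s i
        · rw [hsi] at hxi
          simp only [Bool.false_eq_true, if_false] at hxi
          rw [hGi] at hxi
          rw [max_eq_left hxi]
          simp [hα, hρ, hwi, hsi]
        · rw [hsi] at hxi
          simp only [if_true] at hxi
          rw [hGi] at hxi
          rw [max_eq_right hxi]
          simp only [hα, hρ, hwi, hsi, if_neg, if_pos, ite_true, ne_eq,
            not_false_eq_true, and_self, ite_false]
          ring
    have hsum : ∑ i, a i * max 0 (⟪w i, x⟫ + b i) = ∑ i, (α i * ⟪w i, x⟫ + ρ i) :=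
      Finset.sum_congr rfl fun i _ => hterm i
    have hux : ⟪u, x⟫ = ∑ i, α i * ⟪w i, x⟫ := by
      rw [hu, sum_inner]
      exact Finset.sum_congr rfl fun i _ => real_inner_smul_left _ _ _
    have hgx : ((innerSL ℝ u).toLinearMap.toAffineMap
        + AffineMap.const ℝ (EuclideanSpace ℝ (Fin d)) r) x = ⟪u, x⟫ + r := by simp
    rw [hf x, hsum, Finset.sum_add_distrib, hgx, hux, hr]
    ring
  -- cover
  have hcover : ∀ x, ∃ s ∈ P, x ∈ D s := by
    obtain ⟨v, hv⟩ := exists_good_dir w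
    intro x
    set s : Fin m → Bool := fun i =>
      if 0 < G i x then true else if G i x < 0 then false
      else if 0 < ⟪w i, v⟫ then true else false with hs
    have hxD : x ∈ D s := by
      intro i
      by_cases h1 : 0 < G i x
      · simp [hs, h1, le_of_lt h1]
      · by_cases h2 : G i x < 0
        · simp [hs, h1, h2, le_of_lt h2]
        · have h0 : G i x = 0 := le_antisymm (not_lt.mp h1) (not_lt.mp h2)
          by_cases h3 : 0 < ⟪w i, v⟫ <;> simp [hs, h1, h2, h3, h0]
    have hev : ∀ i, ∀ᶠ t in nhdsWithin (0:ℝ) (Set.Ioi 0),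
        (if s i then 0 < G i (x + t • v) else G i (x + t • v) < 0) := by
      intro i
      by_cases hwi : w i = 0
      · have hGix : G i x = 1 := hG0 i x hwi
        have hstrue : s i = true := by
          have h1' : 0 < G i x := by rw [hGix]; norm_num
          show (if 0 < G i x then true else if G i x < 0 then false
            else if 0 < ⟪w i, v⟫ then true else false) = true
          rw [if_pos h1']
        refine Filter.Eventually.of_forall fun t => ?_
        rw [hstrue, if_pos rfl, hG0 i _ hwi]
        norm_num
      · have hval : ∀ t : ℝ, G i (x + t • v) = G i x + t * ⟪w i, v⟫ := by
          intro t
          rw [hGv i _ hwi, hGv i x hwi, inner_add_right, real_inner_smul_right]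
          ring
        have htend : Filter.Tendsto (fun t : ℝ => G i x + t * ⟪w i, v⟫)
            (nhdsWithin (0:ℝ) (Set.Ioi 0)) (nhds (G i x)) := by
          have hc : Continuous (fun t : ℝ => G i x + t * ⟪w i, v⟫) :=
            continuous_const.add (continuous_id.mul continuous_const)
          have := hc.tendsto 0
          simp only [zero_mul, add_zero] at this
          exact this.mono_left nhdsWithin_le_nhds
        rcases lt_trichotomy (G i x) 0 with hneg | hzero | hpos
        · have hsi : s i = false := by
            show (if 0 < G i x then true else if G i x < 0 then false
              else if 0 < ⟪w i, v⟫ then true else false) = false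
            rw [if_neg (asymm hneg), if_pos hneg]
          rw [hsi]
          simp only [Bool.false_eq_true, if_false]
          exact (htend.eventually_lt_const hneg).mono fun t ht => by rw [hval t]; exact ht
        · have hvnz : ⟪w i, v⟫ ≠ 0 := hv i hwi
          have h1' : ¬ 0 < G i x := by rw [hzero]; exact lt_irrefl 0
          have h2' : ¬ G i x < 0 := by rw [hzero]; exact lt_irrefl 0
          rcases hvnz.lt_or_gt with hcneg | hcpos
          · have hsi : s i = false := by
              show (if 0 < G i x then true else if G i x < 0 then false
                else if 0 < ⟪w i, v⟫ then true else false) = false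
              rw [if_neg h1', if_neg h2', if_neg (asymm hcneg)]
            rw [hsi]
            simp only [Bool.false_eq_true, if_false]
            refine Filter.eventually_of_mem self_mem_nhdsWithin fun t ht => ?_
            rw [hval t, hzero, zero_add]
            exact mul_neg_of_pos_of_neg ht hcneg
          · have hsi : s i = true := by
              show (if 0 < G i x then true else if G i x < 0 then false
                else if 0 < ⟪w i, v⟫ then true else false) = true
              rw [if_neg h1', if_neg h2', if_pos hcpos]
            rw [hsi]
            simp only [if_true]
            refine Filter.eventually_of_mem self_mem_nhdsWithin fun t ht => ?_
            rw [hval t, hzero, zero_add]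
            exact mul_pos ht hcpos
        · have hsi : s i = true := by
            show (if 0 < G i x then true else if G i x < 0 then false
              else if 0 < ⟪w i, v⟫ then true else false) = true
            rw [if_pos hpos]
          rw [hsi]
          simp only [if_true]
          exact (htend.eventually_const_lt hpos).mono fun t ht => by rw [hval t]; exact ht
    have hall := Filter.eventually_all.mpr hev
    obtain ⟨t, htt⟩ := hall.exists
    exact ⟨s, ⟨x + t • v, htt⟩, hxD⟩
  -- assemble
  have hPfin : P.Finite := Set.toFinite _
  refine ⟨hPfin.toFinset.card, ?_, ?_⟩
  · have hNc : P.ncard = hPfin.toFinset.card := Set.ncard_eq_toFinset_card P hPfin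
    have hcount := pattern_count m (EuclideanSpace ℝ (Fin d)) G
    rw [finrank_euclideanSpace_fin, ← hP] at hcount
    obtain ⟨e, rfl⟩ : ∃ e, d = e + 2 := ⟨d - 2, by omega⟩
    have harith := main_arith m e (by omega)
    have h1 : (e + 2 - 1) = e + 1 := by omega
    rw [h1]
    calc Nat.factorial (e+1) * hPfin.toFinset.card
        = Nat.factorial (e+1) * P.ncard := by rw [hNc]
      _ ≤ Nat.factorial (e+1) * ∑ k ∈ Finset.range (e+3), m.choose k :=
          Nat.mul_le_mul_left _ (by simpa using hcount)
      _ ≤ m^(e+2) := harith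
  · set eqv := hPfin.toFinset.equivFin with heqv
    refine ⟨fun j => D ((eqv.symm j) : Fin m → Bool), fun j => hconv _, ?_, fun j => haff _⟩
    rw [Set.iUnion_eq_univ_iff]
    intro x
    obtain ⟨s, hsP, hxD⟩ := hcover x
    refine ⟨eqv ⟨s, hPfin.mem_toFinset.mpr hsP⟩, ?_⟩
    rw [Equiv.symm_apply_apply]
    exact hxD
end
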